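/- arXiv:1804.05888 — 5 statements merged into one kernel-verified Lean document; each statement's English description precedes it below -/
import Mathlib

section
/- Let a ∈ (0,π) and let K ⊂ ℂ be a compact set. Then the series Σ_{n=0}^∞ (1/c_n) |∫₀^π cos(√z x) R_{aπ}(x) cos(nx) dx|, where c_0 := π and c_n := π/2 for n ≥ 1, converges uniformly for z ∈ K. -/
open MeasureTheory Real Set

lemma norm_cos_le' (ζ : ℂ) : ‖Complex.cos ζ‖ ≤ Real.exp |ζ.im| := by
  have h2 : (2:ℝ) * ‖Complex.cos ζ‖ = ‖Complex.exp (ζ * Complex.I) + Complex.exp (-ζ * Complex.I)‖ := by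
    rw [← Complex.two_cos]
    simp [norm_mul]
  have h3 : ‖Complex.exp (ζ * Complex.I) + Complex.exp (-ζ * Complex.I)‖
      ≤ Real.exp |ζ.im| + Real.exp |ζ.im| := by
    refine (norm_add_le _ _).trans (add_le_add ?_ ?_) <;>
    · rw [Complex.norm_exp]
      apply Real.exp_le_exp.mpr
      simp [Complex.mul_re, Complex.I_re, Complex.I_im]
      first
        | exact neg_le_abs ζ.im
        | exact le_abs_self ζ.im
  linarith

lemma cos_mul_ofReal_bd (u : ℂ) (x M : ℝ) (him : |u.im| ≤ M) (hx : |x| ≤ π) :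
    ‖Complex.cos (u * x)‖ ≤ Real.exp (M * π) := by
  refine (norm_cos_le' _).trans (Real.exp_le_exp.mpr ?_)
  have : (u * (x:ℂ)).im = u.im * x := by simp [Complex.mul_im]
  rw [this, abs_mul]
  have h0 : (0:ℝ) ≤ M := le_trans (abs_nonneg _) him
  calc |u.im| * |x| ≤ M * π := mul_le_mul him hx (abs_nonneg _) h0


lemma hasDerivAt_sinpx (p : ℂ) (hp : p ≠ 0) (x : ℝ) :
    HasDerivAt (fun y : ℝ => Complex.sin (p * y) / p) (Complex.cos (p * x)) x := by
  have h1 : HasDerivAt (fun ζ : ℂ => Complex.sin (p * ζ) / p) (Complex.cos (p * x)) (x : ℂ) := by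
    have hlin : HasDerivAt (fun ζ : ℂ => p * ζ) p (x : ℂ) := by
      simpa using (hasDerivAt_id (x : ℂ)).const_mul p
    have := ((Complex.hasDerivAt_sin (p * (x:ℂ))).comp (x:ℂ) hlin).div_const p
    simpa [mul_div_assoc, mul_div_cancel_right₀ _ hp] using this
  exact h1.comp_ofReal

lemma hasDerivAt_tentpx (p : ℂ) (hp : p ≠ 0) (x : ℝ) :
    HasDerivAt (fun y : ℝ => ((π : ℂ) - y) * Complex.sin (p * y) / p - Complex.cos (p * y) / p ^ 2)
      (((π : ℂ) - x) * Complex.cos (p * x)) x := by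
  have h1 : HasDerivAt (fun ζ : ℂ => ((π : ℂ) - ζ) * Complex.sin (p * ζ) / p - Complex.cos (p * ζ) / p ^ 2)
      (((π : ℂ) - x) * Complex.cos (p * x)) (x : ℂ) := by
    have hlin : HasDerivAt (fun ζ : ℂ => p * ζ) p (x : ℂ) := by
      simpa using (hasDerivAt_id (x : ℂ)).const_mul p
    have hsin : HasDerivAt (fun ζ : ℂ => Complex.sin (p * ζ)) (Complex.cos (p * (x:ℂ)) * p) (x:ℂ) :=
      (Complex.hasDerivAt_sin (p * (x:ℂ))).comp (x:ℂ) hlin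
    have hcos : HasDerivAt (fun ζ : ℂ => Complex.cos (p * ζ)) (-Complex.sin (p * (x:ℂ)) * p) (x:ℂ) :=
      (Complex.hasDerivAt_cos (p * (x:ℂ))).comp (x:ℂ) hlin
    have hπ : HasDerivAt (fun ζ : ℂ => (π : ℂ) - ζ) (-1) (x:ℂ) := by
      simpa using (hasDerivAt_id (x:ℂ)).const_sub (π : ℂ)
    have := ((hπ.mul hsin).div_const p).sub (hcos.div_const (p ^ 2))
    refine this.congr_deriv (Eq.symm ?_)
    field_simp
    ring
  exact h1.comp_ofReal

lemma coscos (w ν : ℂ) (x : ℝ) :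
    Complex.cos (w * x) * Complex.cos (ν * x)
      = (Complex.cos ((w + ν) * x) + Complex.cos ((w - ν) * x)) / 2 := by
  rw [add_mul, sub_mul, Complex.cos_add, Complex.cos_sub]
  ring

set_option maxHeartbeats 1000000 in
lemma integral_eval (a : ℝ) (ha0 : 0 < a) (haπ : a < π) (w : ℂ) (n : ℕ)
    (hp' : w + n ≠ 0) (hq' : w - n ≠ 0) :
    (∫ x in (0:ℝ)..π, Complex.cos (w * x) *
        (↑(if x ≤ a then (1:ℝ) else (π - x) / (π - a)) : ℂ) * Complex.cos ((n : ℂ) * x))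
      = ((Complex.cos ((w + n) * a) - Complex.cos ((w + n) * π)) / (w + n) ^ 2
          + (Complex.cos ((w - n) * a) - Complex.cos ((w - n) * π)) / (w - n) ^ 2)
        / (2 * ((π - a : ℝ) : ℂ)) := by
  have hπa : ((π - a : ℝ) : ℂ) ≠ 0 := by
    simp only [ne_eq, Complex.ofReal_eq_zero]
    linarith
  have he : ((π : ℂ) - a) ≠ 0 := by
    rw [show ((π : ℂ) - a) = ((π - a : ℝ) : ℂ) by push_cast; ring]
    exact hπa
  set p := w + (n : ℂ) with hpdef
  set q := w - (n : ℂ) with hqdef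
  have hp : p ≠ 0 := hp'
  have hq : q ≠ 0 := hq'
  set f : ℝ → ℂ := fun x => Complex.cos (w * x) *
      (↑(if x ≤ a then (1:ℝ) else (π - x) / (π - a)) : ℂ) * Complex.cos ((n : ℂ) * x) with hf
  set g₁ : ℝ → ℂ := fun x => Complex.cos (w * x) * Complex.cos ((n : ℂ) * x) with hg1
  set g₂ : ℝ → ℂ := fun x => Complex.cos (w * x) * ((((π - x) / (π - a) : ℝ)) : ℂ)
      * Complex.cos ((n : ℂ) * x) with hg2
  have hg1c : Continuous g₁ := by fun_prop
  have hg2c : Continuous g₂ := by fun_prop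
  set Φ₁ : ℝ → ℂ := fun x => (Complex.sin (p * x) / p + Complex.sin (q * x) / q) / 2 with hΦ1
  set Φ₂ : ℝ → ℂ := fun x =>
      ((((π : ℂ) - x) * Complex.sin (p * x) / p - Complex.cos (p * x) / p ^ 2)
        + (((π : ℂ) - x) * Complex.sin (q * x) / q - Complex.cos (q * x) / q ^ 2))
      / (2 * ((π - a : ℝ) : ℂ)) with hΦ2
  have hd1 : ∀ x : ℝ, HasDerivAt Φ₁ (g₁ x) x := by
    intro x
    have := ((hasDerivAt_sinpx p hp x).add (hasDerivAt_sinpx q hq x)).div_const 2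
    refine this.congr_deriv (Eq.symm ?_)
    simp only [hg1]
    rw [coscos, hpdef, hqdef]
  have hd2 : ∀ x : ℝ, HasDerivAt Φ₂ (g₂ x) x := by
    intro x
    have := ((hasDerivAt_tentpx p hp x).add (hasDerivAt_tentpx q hq x)).div_const
      (2 * ((π - a : ℝ) : ℂ))
    refine this.congr_deriv (Eq.symm ?_)
    simp only [hg2]
    rw [mul_right_comm, coscos, hpdef, hqdef]
    push_cast
    field_simp
  have hI1 : (∫ x in (0:ℝ)..a, g₁ x) = Φ₁ a - Φ₁ 0 :=
    intervalIntegral.integral_eq_sub_of_hasDerivAt (fun x _ => hd1 x)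
      (hg1c.intervalIntegrable _ _)
  have hI2 : (∫ x in a..π, g₂ x) = Φ₂ π - Φ₂ a :=
    intervalIntegral.integral_eq_sub_of_hasDerivAt (fun x _ => hd2 x)
      (hg2c.intervalIntegrable _ _)
  have heq1 : EqOn f g₁ (uIcc (0:ℝ) a) := by
    intro x hx
    rw [uIcc_of_le ha0.le] at hx
    simp only [hf, hg1, if_pos hx.2, Complex.ofReal_one, mul_one]
  have heq2 : EqOn f g₂ (uIcc a π) := by
    intro x hx
    rw [uIcc_of_le haπ.le] at hx
    by_cases hxa : x ≤ a
    · have hxa' : x = a := le_antisymm hxa hx.1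
      have h1 : ((π - x) / (π - a) : ℝ) = 1 := by
        rw [hxa']; exact div_self (by linarith)
      simp only [hf, hg2, if_pos hxa, h1]
    · simp only [hf, hg2, if_neg hxa]
  have hfi1 : IntervalIntegrable f volume 0 a := by
    rw [intervalIntegrable_iff_integrableOn_Ioc_of_le ha0.le]
    exact (hg1c.integrableOn_Ioc).congr_fun
      (fun x hx => (heq1 (by rw [uIcc_of_le ha0.le]; exact ⟨hx.1.le, hx.2⟩)).symm)
      measurableSet_Ioc
  have hfi2 : IntervalIntegrable f volume a π := by
    rw [intervalIntegrable_iff_integrableOn_Ioc_of_le haπ.le]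
    exact (hg2c.integrableOn_Ioc).congr_fun
      (fun x hx => (heq2 (by rw [uIcc_of_le haπ.le]; exact ⟨hx.1.le, hx.2⟩)).symm)
      measurableSet_Ioc
  have hsplit : (∫ x in (0:ℝ)..π, f x)
      = (∫ x in (0:ℝ)..a, f x) + (∫ x in a..π, f x) :=
    (intervalIntegral.integral_add_adjacent_intervals hfi1 hfi2).symm
  have h1 : (∫ x in (0:ℝ)..a, f x) = Φ₁ a - Φ₁ 0 := by
    rw [intervalIntegral.integral_congr heq1, hI1]
  have h2 : (∫ x in a..π, f x) = Φ₂ π - Φ₂ a := by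
    rw [intervalIntegral.integral_congr heq2, hI2]
  clear hpdef hqdef
  clear_value p q
  have hΦ10 : Φ₁ 0 = 0 := by
    simp [hΦ1]
  rw [hsplit, h1, h2, hΦ10, sub_zero]
  simp only [hΦ1, hΦ2, Complex.ofReal_sub, sub_self, zero_mul, zero_div, zero_sub, zero_add]
  generalize Complex.sin (p * ((a:ℝ):ℂ)) = S
  generalize Complex.sin (q * ((a:ℝ):ℂ)) = T
  generalize Complex.cos (p * ((a:ℝ):ℂ)) = A
  generalize Complex.cos (p * ((π:ℝ):ℂ)) = B
  generalize Complex.cos (q * ((a:ℝ):ℂ)) = C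
  generalize Complex.cos (q * ((π:ℝ):ℂ)) = D
  generalize hE : ((π:ℝ):ℂ) - ((a:ℝ):ℂ) = e at he ⊢
  rw [div_sub_div_same]
  rw [show (-(B / p ^ 2) + -(D / q ^ 2)) - (e * S / p - A / p ^ 2 + (e * T / q - C / q ^ 2))
      = ((A - B) / p ^ 2 + (C - D) / q ^ 2) - e * (S / p + T / q) from by ring]
  rw [sub_div]
  rw [show e * (S / p + T / q) / (2 * e) = (S / p + T / q) / 2 from by
    rw [mul_comm 2 e, mul_div_mul_left _ _ he]]
  ring

lemma triv_bound (a : ℝ) (ha0 : 0 < a) (haπ : a < π) (w : ℂ) (n : ℕ) :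
    ‖∫ x in (0:ℝ)..π, Complex.cos (w * x) *
        (↑(if x ≤ a then (1:ℝ) else (π - x) / (π - a)) : ℂ) * Complex.cos ((n : ℂ) * x)‖
      ≤ Real.exp (‖w‖ * π) * π := by
  have h := intervalIntegral.norm_integral_le_of_norm_le_const
    (a := (0:ℝ)) (b := π) (C := Real.exp (‖w‖ * π))
    (f := fun x => Complex.cos (w * x) *
        (↑(if x ≤ a then (1:ℝ) else (π - x) / (π - a)) : ℂ) * Complex.cos ((n : ℂ) * x)) ?_
  · simpa [abs_of_pos Real.pi_pos] using h
  · intro x hx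
    rw [Set.uIoc_of_le Real.pi_pos.le] at hx
    have hx0 : 0 < x := hx.1
    have hxπ : x ≤ π := hx.2
    have h1 : ‖Complex.cos (w * x)‖ ≤ Real.exp (‖w‖ * π) :=
      cos_mul_ofReal_bd w x ‖w‖ (Complex.abs_im_le_norm w)
        (by rw [abs_of_pos hx0]; exact hxπ)
    have h2 : ‖(↑(if x ≤ a then (1:ℝ) else (π - x) / (π - a)) : ℂ)‖ ≤ 1 := by
      rw [Complex.norm_real]
      by_cases hxa : x ≤ a
      · simp [hxa]
      · rw [if_neg hxa]
        have hax : a < x := lt_of_not_ge hxa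
        have h0 : (0:ℝ) ≤ (π - x) / (π - a) := div_nonneg (by linarith) (by linarith)
        rw [Real.norm_eq_abs, abs_of_nonneg h0, div_le_one (by linarith)]
        linarith
    have h3 : ‖Complex.cos ((n : ℂ) * x)‖ ≤ 1 := by
      have := cos_mul_ofReal_bd (n : ℂ) x 0 (by simp) (by rw [abs_of_pos hx0]; exact hxπ)
      simpa using this
    calc ‖Complex.cos (w * x) * (↑(if x ≤ a then (1:ℝ) else (π - x) / (π - a)) : ℂ)
            * Complex.cos ((n : ℂ) * x)‖
        = ‖Complex.cos (w * x)‖ * ‖(↑(if x ≤ a then (1:ℝ) else (π - x) / (π - a)) : ℂ)‖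
            * ‖Complex.cos ((n : ℂ) * x)‖ := by rw [norm_mul, norm_mul]
      _ ≤ Real.exp (‖w‖ * π) * 1 * 1 :=
          mul_le_mul (mul_le_mul h1 h2 (norm_nonneg _) (Real.exp_pos _).le) h3
            (norm_nonneg _) (by positivity)
      _ = Real.exp (‖w‖ * π) := by ring

lemma decay_bound (a : ℝ) (ha0 : 0 < a) (haπ : a < π) (w : ℂ) (n : ℕ)
    (hn : 2 * ‖w‖ + 1 ≤ (n : ℝ)) :
    ‖∫ x in (0:ℝ)..π, Complex.cos (w * x) *
        (↑(if x ≤ a then (1:ℝ) else (π - x) / (π - a)) : ℂ) * Complex.cos ((n : ℂ) * x)‖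
      ≤ 8 * Real.exp (‖w‖ * π) / ((π - a) * (n : ℝ) ^ 2) := by
  have hw0 : (0:ℝ) ≤ ‖w‖ := norm_nonneg w
  have hn1 : (1:ℝ) ≤ (n : ℝ) := by linarith
  have hn0 : (0:ℝ) < (n : ℝ) := by linarith
  have hnn : ‖((n:ℕ) : ℂ)‖ = (n : ℝ) := by
    simp
  have htri_p : (n : ℝ) - ‖w‖ ≤ ‖w + (n : ℂ)‖ := by
    have h := norm_sub_le (w + (n : ℂ)) w
    rw [add_sub_cancel_left, hnn] at h
    linarith
  have htri_q : (n : ℝ) - ‖w‖ ≤ ‖w - (n : ℂ)‖ := by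
    have h := norm_sub_le w (w - (n : ℂ))
    rw [sub_sub_cancel, hnn] at h
    linarith
  have hhalf : (n : ℝ) / 2 ≤ (n : ℝ) - ‖w‖ := by linarith
  have hp_norm : (n : ℝ) / 2 ≤ ‖w + (n : ℂ)‖ := le_trans hhalf htri_p
  have hq_norm : (n : ℝ) / 2 ≤ ‖w - (n : ℂ)‖ := le_trans hhalf htri_q
  have hp : w + (n : ℂ) ≠ 0 := by
    intro h0
    rw [h0, norm_zero] at hp_norm
    linarith
  have hq : w - (n : ℂ) ≠ 0 := by
    intro h0
    rw [h0, norm_zero] at hq_norm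
    linarith
  rw [integral_eval a ha0 haπ w n hp hq]
  set E := Real.exp (‖w‖ * π) with hE
  have hE0 : (0:ℝ) < E := Real.exp_pos _
  have hc : ∀ u : ℂ, u.im = w.im → ∀ t : ℝ, 0 ≤ t → t ≤ π →
      ‖Complex.cos (u * t)‖ ≤ E := by
    intro u hu t ht0 htπ
    exact cos_mul_ofReal_bd u t ‖w‖ (by rw [hu]; exact Complex.abs_im_le_norm w)
      (by rw [abs_of_nonneg ht0]; exact htπ)
  have him_p : (w + (n : ℂ)).im = w.im := by simp
  have him_q : (w - (n : ℂ)).im = w.im := by simp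
  have hnum_p : ‖Complex.cos ((w + (n:ℂ)) * a) - Complex.cos ((w + (n:ℂ)) * π)‖ ≤ 2 * E :=
    (norm_sub_le _ _).trans (by
      have i1 := hc _ him_p a ha0.le haπ.le
      have i2 := hc _ him_p π Real.pi_pos.le le_rfl
      linarith)
  have hnum_q : ‖Complex.cos ((w - (n:ℂ)) * a) - Complex.cos ((w - (n:ℂ)) * π)‖ ≤ 2 * E :=
    (norm_sub_le _ _).trans (by
      have i1 := hc _ him_q a ha0.le haπ.le
      have i2 := hc _ him_q π Real.pi_pos.le le_rfl
      linarith)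
  have hsq : (0:ℝ) < ((n:ℝ)/2)^2 := by positivity
  have hpsq : ((n:ℝ)/2)^2 ≤ ‖w + (n:ℂ)‖^2 := by
    apply pow_le_pow_left₀ (by positivity) hp_norm
  have hqsq : ((n:ℝ)/2)^2 ≤ ‖w - (n:ℂ)‖^2 := by
    apply pow_le_pow_left₀ (by positivity) hq_norm
  have hterm_p : ‖(Complex.cos ((w + (n:ℂ)) * a) - Complex.cos ((w + (n:ℂ)) * π)) / (w + (n:ℂ))^2‖
      ≤ 2 * E / (((n:ℝ)/2)^2) := by
    rw [norm_div, norm_pow]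
    exact div_le_div₀ (by positivity) hnum_p hsq hpsq
  have hterm_q : ‖(Complex.cos ((w - (n:ℂ)) * a) - Complex.cos ((w - (n:ℂ)) * π)) / (w - (n:ℂ))^2‖
      ≤ 2 * E / (((n:ℝ)/2)^2) := by
    rw [norm_div, norm_pow]
    exact div_le_div₀ (by positivity) hnum_q hsq hqsq
  have hden : ‖(2 * ((π - a : ℝ) : ℂ))‖ = 2 * (π - a) := by
    rw [norm_mul, Complex.norm_real, Real.norm_eq_abs, abs_of_pos (by linarith)]
    norm_num
  rw [norm_div, hden]
  have hnum : ‖(Complex.cos ((w + (n:ℂ)) * a) - Complex.cos ((w + (n:ℂ)) * π)) / (w + (n:ℂ))^2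
      + (Complex.cos ((w - (n:ℂ)) * a) - Complex.cos ((w - (n:ℂ)) * π)) / (w - (n:ℂ))^2‖
      ≤ 16 * E / (n:ℝ)^2 := by
    refine (norm_add_le _ _).trans ?_
    have : 2 * E / (((n:ℝ)/2)^2) = 8 * E / (n:ℝ)^2 := by
      field_simp
      ring
    rw [this] at hterm_p hterm_q
    have h16 : 8 * E / (n:ℝ)^2 + 8 * E / (n:ℝ)^2 = 16 * E / (n:ℝ)^2 := by ring
    linarith
  calc ‖(Complex.cos ((w + (n:ℂ)) * a) - Complex.cos ((w + (n:ℂ)) * π)) / (w + (n:ℂ))^2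
      + (Complex.cos ((w - (n:ℂ)) * a) - Complex.cos ((w - (n:ℂ)) * π)) / (w - (n:ℂ))^2‖
        / (2 * (π - a))
      ≤ (16 * E / (n:ℝ)^2) / (2 * (π - a)) :=
        (div_le_div_iff_of_pos_right (by linarith)).mpr hnum
      _ = 8 * E / ((π - a) * (n:ℝ)^2) := by
        have hπa0 : (0:ℝ) < π - a := by linarith
        rw [div_div, div_eq_div_iff (mul_ne_zero (by positivity) (by positivity))
          (mul_ne_zero hπa0.ne' (by positivity))]
        ring

/-- Oversampling convergence hypothesis in the free case `V ≡ 0`: for `a ∈ (0,π)` and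
compact `K ⊂ ℂ`, the series `Σₙ (1/cₙ) |∫₀^π cos(√z x) R_{aπ}(x) cos(nx) dx|`
(with `c₀ = π`, `cₙ = π/2` for `n ≥ 1`) converges uniformly on `K`. -/
theorem free_oversampling_hypothesis
    (a : ℝ) (ha0 : 0 < a) (haπ : a < π)
    (K : Set ℂ) (hK : IsCompact K) :
    ∃ S : ℂ → ℝ, TendstoUniformlyOn
      (fun (N : ℕ) (z : ℂ) => ∑ n ∈ Finset.range N,
        (1 / (if n = 0 then π else π / 2)) *
          ‖∫ x in (0:ℝ)..π, Complex.cos (z ^ (1/2 : ℂ) * x) *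
            (↑(if x ≤ a then (1:ℝ) else (π - x) / (π - a)) : ℂ) *
            Complex.cos ((n : ℂ) * x)‖)
      S Filter.atTop K := by
  obtain ⟨r, hr⟩ := hK.isBounded.subset_closedBall 0
  set M : ℝ := (max r 0) ^ ((1:ℝ)/2) with hM
  have hM0 : 0 ≤ M := Real.rpow_nonneg (le_max_right r 0) _
  have hwM : ∀ z ∈ K, ‖z ^ (1/2 : ℂ)‖ ≤ M := by
    intro z hz
    have hz' : ‖z‖ ≤ max r 0 := by
      have := hr hz
      rw [Metric.mem_closedBall, Complex.dist_eq, sub_zero] at this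
      exact this.trans (le_max_left r 0)
    have h12 : (1/2 : ℂ) = (((1:ℝ)/2 : ℝ) : ℂ) := by norm_num
    rw [h12, Complex.norm_cpow_real]
    exact Real.rpow_le_rpow (norm_nonneg z) hz' (by norm_num)
  set E : ℝ := Real.exp (M * π) with hE
  have hE0 : (0:ℝ) < E := Real.exp_pos _
  set C : ℝ := 16 * E / (π * (π - a)) with hC
  set T : ℝ := 2 * E with hT
  obtain ⟨N₀, hN₀⟩ := exists_nat_ge (2 * M + 1)
  set u : ℕ → ℝ := fun n => if n < N₀ then T else C / (n : ℝ)^2 with hu_def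
  -- summability
  have hbase : Summable (fun m : ℕ => C * (1 / (m : ℝ)^2)) :=
    (Real.summable_one_div_nat_pow.mpr one_lt_two).mul_left C
  have hu : Summable u := by
    rw [← summable_nat_add_iff N₀]
    refine ((summable_nat_add_iff N₀).mpr hbase).congr (fun m => ?_)
    simp only [hu_def, if_neg (not_lt.mpr (Nat.le_add_left N₀ m)), mul_one_div]
  -- term bound
  have hfu : ∀ (n : ℕ), ∀ z ∈ K,
      ‖(1 / (if n = 0 then π else π / 2)) *
          ‖∫ x in (0:ℝ)..π, Complex.cos (z ^ (1/2 : ℂ) * x) *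
            (↑(if x ≤ a then (1:ℝ) else (π - x) / (π - a)) : ℂ) *
            Complex.cos ((n : ℂ) * x)‖‖ ≤ u n := by
    intro n z hz
    set w : ℂ := z ^ (1/2 : ℂ) with hw
    have hwb : ‖w‖ ≤ M := hwM z hz
    have hEw : Real.exp (‖w‖ * π) ≤ E :=
      Real.exp_le_exp.mpr (mul_le_mul_of_nonneg_right hwb Real.pi_pos.le)
    have hcn_pos : (0:ℝ) < (if n = 0 then π else π / 2) := by
      split <;> [exact Real.pi_pos; linarith [Real.pi_pos]]
    have hcn : (1 / (if n = 0 then π else π / 2) : ℝ) ≤ 2 / π := by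
      split
      · rw [div_le_div_iff₀ Real.pi_pos Real.pi_pos]
        nlinarith [Real.pi_pos]
      · exact le_of_eq (one_div_div π 2)
    set I : ℝ := ‖∫ x in (0:ℝ)..π, Complex.cos (w * x) *
        (↑(if x ≤ a then (1:ℝ) else (π - x) / (π - a)) : ℂ) *
        Complex.cos ((n : ℂ) * x)‖ with hIdef
    have hI0 : 0 ≤ I := norm_nonneg _
    rw [Real.norm_eq_abs, abs_of_nonneg (mul_nonneg (by positivity) hI0)]
    by_cases hn : n < N₀
    · -- trivial bound
      have hI : I ≤ E * π := by
        rw [hIdef]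
        refine (triv_bound a ha0 haπ w n).trans ?_
        exact mul_le_mul_of_nonneg_right hEw Real.pi_pos.le
      rw [hu_def]
      simp only [if_pos hn]
      calc (1 / (if n = 0 then π else π / 2) : ℝ) * I
          ≤ (2/π) * (E * π) :=
            mul_le_mul hcn hI hI0 (by positivity)
        _ = T := by
            rw [hT]
            field_simp
    · -- decay bound
      push_neg at hn
      have hn' : 2 * ‖w‖ + 1 ≤ (n : ℝ) := by
        have h1 : (N₀ : ℝ) ≤ (n : ℝ) := Nat.cast_le.mpr hn
        have h2 : 2 * ‖w‖ + 1 ≤ 2 * M + 1 := by linarith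
        linarith
      have hn0 : (0:ℝ) < (n : ℝ) := by nlinarith [norm_nonneg w]
      have hden : (0:ℝ) < (π - a) * (n:ℝ)^2 := mul_pos (by linarith) (by positivity)
      have hI : I ≤ 8 * E / ((π - a) * (n:ℝ)^2) := by
        rw [hIdef]
        refine (decay_bound a ha0 haπ w n hn').trans ?_
        exact (div_le_div_iff_of_pos_right hden).mpr (by linarith)
      rw [hu_def]
      simp only [if_neg (not_lt.mpr hn)]
      calc (1 / (if n = 0 then π else π / 2) : ℝ) * I
          ≤ (2/π) * (8 * E / ((π - a) * (n:ℝ)^2)) :=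
            mul_le_mul hcn hI hI0 (by positivity)
        _ = C / (n:ℝ)^2 := by
            rw [hC, div_mul_div_comm, div_div]
            ring_nf
  exact ⟨_, tendstoUniformlyOn_tsum_nat hu hfu⟩
end

section
/- Let b > π and set k̊_n(z) := ∫₀^π cos(nx) cos(√z x) dx, c_0 := π and c_n := π/2 for n ≥ 1. Then for every compact set K ⊂ ℂ the series Σ_{n=0}^∞ (1/c_n) |k̊_n(z)| converges uniformly for z ∈ K; consequently, for each z ∈ ℂ the series Σ_{n=0}^∞ (k̊_n(z)/c_n) cos(nx) converges absolutely, uniformly with respect to x ∈ [0,b]. -/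
open MeasureTheory Real Set

lemma norm_cexp_le (z : ℂ) : ‖Complex.exp z‖ ≤ Real.exp ‖z‖ := by
  rw [Complex.norm_exp]
  exact Real.exp_le_exp.2 (Complex.re_le_norm z)

lemma norm_csin_le (z : ℂ) : ‖Complex.sin z‖ ≤ Real.exp ‖z‖ := by
  have h1 : ‖Complex.exp (-z * Complex.I)‖ ≤ Real.exp ‖z‖ := by
    simpa using norm_cexp_le (-z * Complex.I)
  have h2 : ‖Complex.exp (z * Complex.I)‖ ≤ Real.exp ‖z‖ := by
    simpa using norm_cexp_le (z * Complex.I)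
  have h3 := norm_sub_le (Complex.exp (-z * Complex.I)) (Complex.exp (z * Complex.I))
  rw [Complex.sin, norm_div, norm_mul, Complex.norm_I, mul_one]
  have : ‖(2:ℂ)‖ = 2 := by norm_num
  rw [this]
  linarith

lemma norm_ccos_le (z : ℂ) : ‖Complex.cos z‖ ≤ Real.exp ‖z‖ := by
  have h1 : ‖Complex.exp (-z * Complex.I)‖ ≤ Real.exp ‖z‖ := by
    simpa using norm_cexp_le (-z * Complex.I)
  have h2 : ‖Complex.exp (z * Complex.I)‖ ≤ Real.exp ‖z‖ := by
    simpa using norm_cexp_le (z * Complex.I)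
  have h3 := norm_add_le (Complex.exp (z * Complex.I)) (Complex.exp (-z * Complex.I))
  rw [Complex.cos, norm_div]
  have : ‖(2:ℂ)‖ = 2 := by norm_num
  rw [this]
  linarith

lemma norm_ccos_nat_real_le (n : ℕ) (x : ℝ) : ‖Complex.cos ((n:ℂ) * x)‖ ≤ 1 := by
  rw [show ((n:ℂ) * x) = (((n:ℝ) * x : ℝ) : ℂ) by push_cast; ring, ← Complex.ofReal_cos,
    Complex.norm_real, Real.norm_eq_abs]
  exact Real.abs_cos_le_one _

lemma kn_formula (n : ℕ) (w : ℂ) (h1 : (n:ℂ) + w ≠ 0) (h2 : (n:ℂ) - w ≠ 0) :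
    ∫ x in (0:ℝ)..π, Complex.cos ((n:ℂ) * x) * Complex.cos (w * x)
      = Complex.cos ((n:ℂ) * π) * Complex.sin (w * π) * (-w) / (((n:ℂ) + w) * ((n:ℂ) - w)) := by
  have hpt : EqOn (fun x : ℝ => Complex.cos ((n:ℂ) * x) * Complex.cos (w * x))
      (fun x : ℝ => (Complex.cos (((n:ℂ) + w) * x) + Complex.cos (((n:ℂ) - w) * x)) / 2)
      (Set.uIcc (0:ℝ) π) := by
    intro x _
    simp only [add_mul, sub_mul, Complex.cos_add, Complex.cos_sub]
    ring
  rw [intervalIntegral.integral_congr hpt]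
  have ci : ∀ c : ℂ, IntervalIntegrable (fun x : ℝ => Complex.cos (c * x)) volume 0 π :=
    fun c => (Complex.continuous_cos.comp
      (continuous_const.mul Complex.continuous_ofReal)).intervalIntegrable _ _
  rw [intervalIntegral.integral_div, intervalIntegral.integral_add (ci _) (ci _),
    integral_cos_mul_complex h1, integral_cos_mul_complex h2]
  have e1 : Complex.sin (((n:ℂ) + w) * π) = Complex.cos ((n:ℂ) * π) * Complex.sin (w * π) := by
    rw [add_mul, Complex.sin_add, Complex.sin_nat_mul_pi]
    ring
  have e2 : Complex.sin (((n:ℂ) - w) * π) = -(Complex.cos ((n:ℂ) * π) * Complex.sin (w * π)) := by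
    rw [sub_mul, Complex.sin_sub, Complex.sin_nat_mul_pi]
    ring
  simp only [Complex.ofReal_zero, mul_zero, Complex.sin_zero, zero_div, sub_zero, e1, e2]
  field_simp
  ring

lemma kn_crude (R : ℝ) (w : ℂ) (hw : ‖w‖ ≤ R) (n : ℕ) :
    ‖∫ x in (0:ℝ)..π, Complex.cos ((n:ℂ) * x) * Complex.cos (w * x)‖ ≤ Real.exp (R * π) * π := by
  have hR : 0 ≤ R := le_trans (norm_nonneg w) hw
  have h := intervalIntegral.norm_integral_le_of_norm_le_const
    (C := Real.exp (R * π)) (a := (0:ℝ)) (b := π)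
    (f := fun x : ℝ => Complex.cos ((n:ℂ) * x) * Complex.cos (w * x)) ?_
  · simpa [abs_of_nonneg pi_pos.le] using h
  · intro x hx
    rw [Set.uIoc_of_le pi_pos.le] at hx
    have hx0 : 0 < x := hx.1
    have hxπ : x ≤ π := hx.2
    have hb : ‖Complex.cos (w * x)‖ ≤ Real.exp (R * π) := by
      refine (norm_ccos_le _).trans (Real.exp_le_exp.2 ?_)
      rw [norm_mul, Complex.norm_real, Real.norm_eq_abs, abs_of_pos hx0]
      exact mul_le_mul hw hxπ hx0.le hR
    calc ‖Complex.cos ((n:ℂ) * x) * Complex.cos (w * x)‖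
        = ‖Complex.cos ((n:ℂ) * x)‖ * ‖Complex.cos (w * x)‖ := norm_mul _ _
      _ ≤ 1 * Real.exp (R * π) := mul_le_mul (norm_ccos_nat_real_le n x) hb (norm_nonneg _)
          zero_le_one
      _ = Real.exp (R * π) := one_mul _

lemma kn_decay (R : ℝ) (w : ℂ) (hw : ‖w‖ ≤ R) (n : ℕ) (hn : 2 * R + 1 ≤ (n:ℝ)) :
    ‖∫ x in (0:ℝ)..π, Complex.cos ((n:ℂ) * x) * Complex.cos (w * x)‖
      ≤ 4 * R * Real.exp (R * π) / (n:ℝ) ^ 2 := by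
  have hR : 0 ≤ R := le_trans (norm_nonneg w) hw
  have hnpos : (0:ℝ) < n := by linarith
  have hhalf : (n:ℝ) / 2 ≤ (n:ℝ) - R := by linarith
  have hnormn : ‖((n:ℕ):ℂ)‖ = (n:ℝ) := by simp
  have la : (n:ℝ) / 2 ≤ ‖(n:ℂ) + w‖ := by
    have h : ‖((n:ℕ):ℂ)‖ ≤ ‖(n:ℂ) + w‖ + ‖w‖ := by
      simpa using norm_sub_le ((n:ℂ) + w) w
    rw [hnormn] at h
    linarith
  have lb : (n:ℝ) / 2 ≤ ‖(n:ℂ) - w‖ := by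
    have h : ‖((n:ℕ):ℂ)‖ ≤ ‖(n:ℂ) - w‖ + ‖w‖ := by
      simpa using norm_add_le ((n:ℂ) - w) w
    rw [hnormn] at h
    linarith
  have h1 : (n:ℂ) + w ≠ 0 := by
    intro h
    rw [h, norm_zero] at la
    linarith
  have h2 : (n:ℂ) - w ≠ 0 := by
    intro h
    rw [h, norm_zero] at lb
    linarith
  rw [kn_formula n w h1 h2]
  rw [norm_div, norm_mul, norm_mul, norm_mul, norm_neg]
  have hcos : ‖Complex.cos ((n:ℂ) * π)‖ ≤ 1 := norm_ccos_nat_real_le n π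
  have hsin : ‖Complex.sin (w * π)‖ ≤ Real.exp (R * π) := by
    refine (norm_csin_le _).trans (Real.exp_le_exp.2 ?_)
    rw [norm_mul, Complex.norm_real, Real.norm_eq_abs, abs_of_pos pi_pos]
    exact mul_le_mul_of_nonneg_right hw pi_pos.le
  calc ‖Complex.cos ((n:ℂ) * π)‖ * ‖Complex.sin (w * π)‖ * ‖w‖ / (‖(n:ℂ) + w‖ * ‖(n:ℂ) - w‖)
      ≤ 1 * Real.exp (R * π) * R / ((n:ℝ) / 2 * ((n:ℝ) / 2)) := by
        apply div_le_div₀ (by positivity) ?_ (by positivity) ?_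
        · gcongr
        · exact mul_le_mul la lb (by positivity) (norm_nonneg _)
    _ = 4 * R * Real.exp (R * π) / (n:ℝ) ^ 2 := by
        field_simp
        ring

lemma term_nonneg (n : ℕ) (r : ℝ) (hr : 0 ≤ r) :
    0 ≤ (1 / (if n = 0 then π else π / 2)) * r := by
  apply mul_nonneg _ hr
  apply one_div_nonneg.2
  split <;> positivity

lemma cn_le (n : ℕ) : (1 / (if n = 0 then π else π / 2)) ≤ 2 / π := by
  split
  · rw [div_le_div_iff₀ pi_pos pi_pos]
    nlinarith [pi_pos]
  · rw [one_div_div]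

lemma main_bound (R : ℝ) (hR : 0 ≤ R) : ∃ u : ℕ → ℝ, Summable u ∧ ∀ w : ℂ, ‖w‖ ≤ R → ∀ n : ℕ,
    (1 / (if n = 0 then π else π / 2)) *
      ‖∫ x in (0:ℝ)..π, Complex.cos ((n : ℂ) * x) * Complex.cos (w * x)‖ ≤ u n := by
  set N₀ := Nat.ceil (2 * R + 1) with hN₀
  refine ⟨fun n => (if n < N₀ then 2 * Real.exp (R * π) else 0)
    + (2 / π) * (4 * R * Real.exp (R * π)) * (1 / (n:ℝ) ^ 2), ?_, ?_⟩
  · apply Summable.add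
    · apply summable_of_ne_finset_zero (s := Finset.range N₀)
      intro n hn
      rw [Finset.mem_range, not_lt] at hn
      rw [if_neg (not_lt.2 hn)]
    · exact (Real.summable_one_div_nat_pow.mpr one_lt_two).mul_left _
  · intro w hw n
    dsimp only
    by_cases hcase : n < N₀
    · have crude := kn_crude R w hw n
      have hle : (1 / (if n = 0 then π else π / 2)) *
          ‖∫ x in (0:ℝ)..π, Complex.cos ((n : ℂ) * x) * Complex.cos (w * x)‖
          ≤ (2 / π) * (Real.exp (R * π) * π) :=
        mul_le_mul (cn_le n) crude (norm_nonneg _) (by positivity)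
      have h2 : (2 / π) * (Real.exp (R * π) * π) = 2 * Real.exp (R * π) := by
        field_simp
      rw [if_pos hcase]
      have hnn : 0 ≤ (2 / π) * (4 * R * Real.exp (R * π)) * (1 / (n:ℝ) ^ 2) := by positivity
      linarith
    · push_neg at hcase
      have hn : 2 * R + 1 ≤ (n:ℝ) := le_trans (Nat.le_ceil _) (Nat.cast_le.2 hcase)
      have decay := kn_decay R w hw n hn
      rw [if_neg (not_lt.2 hcase), zero_add]
      calc (1 / (if n = 0 then π else π / 2)) *
          ‖∫ x in (0:ℝ)..π, Complex.cos ((n : ℂ) * x) * Complex.cos (w * x)‖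
          ≤ (2 / π) * (4 * R * Real.exp (R * π) / (n:ℝ) ^ 2) :=
            mul_le_mul (cn_le n) decay (norm_nonneg _) (by positivity)
        _ = (2 / π) * (4 * R * Real.exp (R * π)) * (1 / (n:ℝ) ^ 2) := by ring

lemma norm_cpow_half_le (z : ℂ) (M : ℝ) (hM : ‖z‖ ≤ M) :
    ‖z ^ (1/2 : ℂ)‖ ≤ (max M 0) ^ ((1:ℝ)/2) := by
  have h12 : (1/2 : ℂ) = ((1/2 : ℝ) : ℂ) := by norm_num
  calc ‖z ^ (1/2 : ℂ)‖
      ≤ ‖z‖ ^ ((1/2 : ℂ)).re / Real.exp (Complex.arg z * ((1/2 : ℂ)).im) :=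
        Complex.norm_cpow_le z _
    _ = ‖z‖ ^ ((1:ℝ)/2) := by
        rw [h12, Complex.ofReal_re, Complex.ofReal_im, mul_zero, Real.exp_zero, div_one]
    _ ≤ (max M 0) ^ ((1:ℝ)/2) := by
        apply Real.rpow_le_rpow (norm_nonneg z) _ (by norm_num)
        exact le_trans hM (le_max_left _ _)

/-- Undersampling convergence hypothesis in the free case `V ≡ 0`: with
`k̊ₙ(z) = ∫₀^π cos(nx) cos(√z x) dx`, `c₀ = π`, `cₙ = π/2` (`n ≥ 1`), the series
`Σₙ |k̊ₙ(z)|/cₙ` converges uniformly on each compact `K ⊂ ℂ`; consequently, for each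
`z ∈ ℂ` the series `Σₙ (k̊ₙ(z)/cₙ) cos(nx)` converges absolutely, uniformly for
`x ∈ [0,b]`. -/
theorem free_undersampling_hypothesis (b : ℝ) (hb : π < b) :
    (∀ K : Set ℂ, IsCompact K →
      ∃ S : ℂ → ℝ, TendstoUniformlyOn
        (fun (N : ℕ) (z : ℂ) => ∑ n ∈ Finset.range N,
          (1 / (if n = 0 then π else π / 2)) *
            ‖∫ x in (0:ℝ)..π, Complex.cos ((n : ℂ) * x) * Complex.cos (z ^ (1/2 : ℂ) * x)‖)
        S Filter.atTop K) ∧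
    ∀ z : ℂ, Summable (fun n : ℕ =>
      (1 / (if n = 0 then π else π / 2)) *
        ‖∫ x in (0:ℝ)..π, Complex.cos ((n : ℂ) * x) * Complex.cos (z ^ (1/2 : ℂ) * x)‖ *
        ⨆ x ∈ Icc (0:ℝ) b, ‖Complex.cos ((n : ℂ) * x)‖) := by
  constructor
  · intro K hK
    obtain ⟨M, hM⟩ := hK.isBounded.exists_norm_le
    set R := (max M 0) ^ ((1:ℝ)/2) with hRdef
    have hR : 0 ≤ R := Real.rpow_nonneg (le_max_right M 0) _
    obtain ⟨u, hu, hub⟩ := main_bound R hR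
    refine ⟨_, tendstoUniformlyOn_tsum_nat hu ?_⟩
    intro n z hz
    rw [Real.norm_eq_abs, abs_of_nonneg (term_nonneg n _ (norm_nonneg _))]
    exact hub _ (norm_cpow_half_le z M (hM _ hz)) n
  · intro z
    obtain ⟨u, hu, hub⟩ := main_bound ‖z ^ (1/2 : ℂ)‖ (norm_nonneg _)
    apply Summable.of_nonneg_of_le _ _ hu
    · intro n
      apply mul_nonneg (term_nonneg n _ (norm_nonneg _))
      exact Real.iSup_nonneg fun x => Real.iSup_nonneg fun _ => norm_nonneg _
    · intro n
      have hS1 : (⨆ x ∈ Icc (0:ℝ) b, ‖Complex.cos ((n:ℂ) * x)‖) ≤ 1 :=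
        Real.iSup_le (fun x => Real.iSup_le (fun _ => norm_ccos_nat_real_le n x) zero_le_one)
          zero_le_one
      calc (1 / (if n = 0 then π else π / 2)) *
          ‖∫ x in (0:ℝ)..π, Complex.cos ((n : ℂ) * x) * Complex.cos (z ^ (1/2 : ℂ) * x)‖ *
          ⨆ x ∈ Icc (0:ℝ) b, ‖Complex.cos ((n : ℂ) * x)‖
          ≤ (1 / (if n = 0 then π else π / 2)) *
            ‖∫ x in (0:ℝ)..π, Complex.cos ((n : ℂ) * x) * Complex.cos (z ^ (1/2 : ℂ) * x)‖ * 1 :=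
            mul_le_mul_of_nonneg_left hS1 (term_nonneg n _ (norm_nonneg _))
        _ = (1 / (if n = 0 then π else π / 2)) *
            ‖∫ x in (0:ℝ)..π, Complex.cos ((n : ℂ) * x) * Complex.cos (z ^ (1/2 : ℂ) * x)‖ :=
            mul_one _
        _ ≤ u n := hub _ le_rfl n
end

section
/- For every z ∈ ℂ and x ∈ [0,a], the x-derivative of the solution satisfies ∂ₓξ(x,z) = −√z sin(√z x) + ∫₀^x cos(√z (x−y)) V(y) ξ(y,z) dy, and there exists a constant C = C(a,V) > 0 such that |∂ₓξ(x,z) + √z sin(√z x)| ≤ C e^{|Im √z| x} ∫₀^x |V(y)| dy for all z ∈ ℂ and x ∈ [0,a]. -/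
open MeasureTheory Real Set




lemma triangle_swap (x : ℝ) (hx : 0 ≤ x) (K : ℝ → ℝ → ℂ)
    (hK : Continuous (Function.uncurry K)) (φ : ℝ → ℂ)
    (hφ : IntegrableOn φ (Icc 0 x)) :
    ∫ y in (0:ℝ)..x, (∫ t in y..x, K t y) * φ y
      = ∫ t in (0:ℝ)..x, ∫ y in (0:ℝ)..t, K t y * φ y := by
  set μ : Measure ℝ := volume.restrict (Icc (0:ℝ) x) with hμ
  set s : Set (ℝ × ℝ) := {p : ℝ × ℝ | p.2 ≤ p.1} with hs
  set g : ℝ × ℝ → ℂ := fun p => K p.1 p.2 * φ p.2 with hg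
  set F : ℝ × ℝ → ℂ := s.indicator g with hF
  have hsm : MeasurableSet s := (isClosed_le continuous_snd continuous_fst).measurableSet
  have hφμ : Integrable φ μ := hφ
  -- bound for K on the box
  obtain ⟨C, hC⟩ := (isCompact_Icc.prod isCompact_Icc).exists_bound_of_continuousOn
    (hK.continuousOn (s := Icc (0:ℝ) x ×ˢ Icc (0:ℝ) x))
  have hC0 : 0 ≤ C := le_trans (norm_nonneg _) (hC (0, 0) (Set.mk_mem_prod ⟨le_rfl, hx⟩ ⟨le_rfl, hx⟩))
  -- integrability of F on the product
  have hFi : Integrable F (μ.prod μ) := by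
    have hmeas : AEStronglyMeasurable F (μ.prod μ) :=
      ((hK.aestronglyMeasurable).mul (hφμ.aestronglyMeasurable.comp_snd)).indicator hsm
    have hdom : Integrable (fun p : ℝ × ℝ => C * ‖φ p.2‖) (μ.prod μ) := by
      refine Integrable.mul_prod (L := ℝ) (f := fun _ : ℝ => C) (g := fun y => ‖φ y‖) ?_ hφμ.norm
      rw [hμ, integrable_const_iff]
      right
      exact isFiniteMeasure_restrict.mpr measure_Icc_lt_top.ne
    refine hdom.mono' hmeas ?_
    have : ∀ᵐ p ∂(μ.prod μ), p ∈ Icc (0:ℝ) x ×ˢ Icc (0:ℝ) x := by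
      rw [hμ, Measure.prod_restrict]
      exact ae_restrict_mem (measurableSet_Icc.prod measurableSet_Icc)
    filter_upwards [this] with p hp
    by_cases hps : p ∈ s
    · rw [hF, Set.indicator_of_mem hps, hg]
      calc ‖K p.1 p.2 * φ p.2‖ = ‖K p.1 p.2‖ * ‖φ p.2‖ := norm_mul _ _
        _ ≤ C * ‖φ p.2‖ := by
            exact mul_le_mul_of_nonneg_right (hC p hp) (norm_nonneg _)
    · rw [hF, Set.indicator_of_notMem hps, norm_zero]
      positivity
  have swap := MeasureTheory.integral_integral_swap (μ := μ) (ν := μ)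
    (f := fun t y => F (t, y)) hFi
  -- identify LHS
  have hL : (∫ y in (0:ℝ)..x, (∫ t in y..x, K t y) * φ y)
      = ∫ y, (∫ t, F (t, y) ∂μ) ∂μ := by
    rw [intervalIntegral.integral_of_le hx, ← integral_Icc_eq_integral_Ioc]
    refine (setIntegral_congr_fun measurableSet_Icc fun y hy => ?_).symm
    have h1 : (fun t => F (t, y)) = (Ici y).indicator (fun t => K t y * φ y) := by
      funext t
      by_cases h : y ≤ t
      · simp [hF, hg, hs, Set.indicator_of_mem, h]
      · simp [hF, hg, hs, Set.indicator_of_notMem, h]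
    rw [h1, integral_indicator measurableSet_Ici, hμ,
      Measure.restrict_restrict measurableSet_Ici]
    have h2 : Ici y ∩ Icc 0 x = Icc y x := by
      ext t
      simp only [mem_inter_iff, mem_Ici, mem_Icc]
      constructor
      · rintro ⟨h1, h2, h3⟩; exact ⟨h1, h3⟩
      · rintro ⟨h1, h2⟩; exact ⟨h1, le_trans hy.1 h1, h2⟩
    rw [h2, integral_Icc_eq_integral_Ioc, ← intervalIntegral.integral_of_le hy.2,
      intervalIntegral.integral_mul_const]
  -- identify RHS
  have hR : (∫ t in (0:ℝ)..x, ∫ y in (0:ℝ)..t, K t y * φ y)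
      = ∫ t, (∫ y, F (t, y) ∂μ) ∂μ := by
    rw [intervalIntegral.integral_of_le hx, ← integral_Icc_eq_integral_Ioc]
    refine (setIntegral_congr_fun measurableSet_Icc fun t ht => ?_).symm
    have h1 : (fun y => F (t, y)) = (Iic t).indicator (fun y => K t y * φ y) := by
      funext y
      by_cases h : y ≤ t
      · simp [hF, hg, hs, Set.indicator_of_mem, h]
      · simp [hF, hg, hs, Set.indicator_of_notMem, h]
    rw [h1, integral_indicator measurableSet_Iic, hμ,
      Measure.restrict_restrict measurableSet_Iic]
    have h2 : Iic t ∩ Icc 0 x = Icc 0 t := by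
      ext y
      simp only [mem_inter_iff, mem_Iic, mem_Icc]
      constructor
      · rintro ⟨h1, h2, h3⟩; exact ⟨h2, h1⟩
      · rintro ⟨h1, h2⟩; exact ⟨h2, h1, le_trans h2 ht.2⟩
    rw [h2, integral_Icc_eq_integral_Ioc, ← intervalIntegral.integral_of_le ht.1]
  rw [hL, hR]
  exact swap.symm


lemma norm_complex_cos_le (w : ℂ) : ‖Complex.cos w‖ ≤ Real.exp |w.im| := by
  rw [Complex.cos]
  have h1 : ‖Complex.exp (w * Complex.I)‖ = Real.exp (-w.im) := by
    rw [Complex.norm_exp, Complex.mul_I_re]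
  have h2 : ‖Complex.exp (-w * Complex.I)‖ = Real.exp w.im := by
    rw [Complex.norm_exp]
    simp [Complex.mul_I_re]
  calc ‖(Complex.exp (w * Complex.I) + Complex.exp (-w * Complex.I)) / 2‖
      ≤ (‖Complex.exp (w * Complex.I)‖ + ‖Complex.exp (-w * Complex.I)‖) / 2 := by
        rw [norm_div]
        gcongr
        · exact norm_add_le _ _
        · norm_num
    _ = (Real.exp (-w.im) + Real.exp w.im) / 2 := by rw [h1, h2]
    _ ≤ (Real.exp |w.im| + Real.exp |w.im|) / 2 := by
        gcongr <;> [exact neg_le_abs _; exact le_abs_self _]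
    _ = Real.exp |w.im| := by ring

lemma sqrt_mul_self_complex (z : ℂ) : z ^ (1/2 : ℂ) * z ^ (1/2 : ℂ) = z := by
  by_cases hz : z = 0
  · rw [hz, Complex.zero_cpow (by norm_num), mul_zero]
  · rw [← Complex.cpow_add _ _ hz]
    norm_num

lemma hasDerivAt_cosker (s c : ℂ) (t : ℝ) :
    HasDerivAt (fun t : ℝ => Complex.cos (s * (c - ↑t)))
      (s * Complex.sin (s * (c - ↑t))) t := by
  have h : HasDerivAt (fun w : ℂ => Complex.cos (s * (c - w)))
      (s * Complex.sin (s * (c - ↑t))) (↑t : ℂ) := by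
    have h1 : HasDerivAt (fun w : ℂ => s * (c - w)) (-s) (↑t : ℂ) := by
      simpa using (((hasDerivAt_id (↑t : ℂ)).const_sub c).const_mul s)
    have h2 := (Complex.hasDerivAt_cos (s * (c - ↑t))).comp (↑t : ℂ) h1
    refine h2.congr_deriv ?_
    ring
  exact h.comp_ofReal

lemma hasDerivAt_sinker (s c : ℂ) (t : ℝ) :
    HasDerivAt (fun t : ℝ => s * Complex.sin (s * (c - ↑t)))
      (-(s * s) * Complex.cos (s * (c - ↑t))) t := by
  have h : HasDerivAt (fun w : ℂ => s * Complex.sin (s * (c - w)))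
      (-(s * s) * Complex.cos (s * (c - ↑t))) (↑t : ℂ) := by
    have h1 : HasDerivAt (fun w : ℂ => s * (c - w)) (-s) (↑t : ℂ) := by
      simpa using (((hasDerivAt_id (↑t : ℂ)).const_sub c).const_mul s)
    have h2 := ((Complex.hasDerivAt_sin (s * (c - ↑t))).comp (↑t : ℂ) h1).const_mul s
    refine h2.congr_deriv ?_
    ring
  exact h.comp_ofReal

lemma hasDerivAt_coslin (s : ℂ) (t : ℝ) :
    HasDerivAt (fun t : ℝ => Complex.cos (s * ↑t)) (-s * Complex.sin (s * ↑t)) t := by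
  have h : HasDerivAt (fun w : ℂ => Complex.cos (s * w)) (-s * Complex.sin (s * ↑t)) (↑t : ℂ) := by
    have h1 : HasDerivAt (fun w : ℂ => s * w) s (↑t : ℂ) := by
      simpa using (hasDerivAt_id (↑t : ℂ)).const_mul s
    have h2 := (Complex.hasDerivAt_cos (s * ↑t)).comp (↑t : ℂ) h1
    refine h2.congr_deriv ?_
    ring
  exact h.comp_ofReal


lemma gronwall_aux (b : ℝ) (hb : 0 ≤ b) (g h : ℝ → ℝ)
    (hg : IntegrableOn g (Icc 0 b)) (hg0 : ∀ y ∈ Icc 0 b, 0 ≤ g y)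
    (hh : ContinuousOn h (Icc 0 b)) (hh0 : ∀ y ∈ Icc 0 b, 0 ≤ h y)
    (hineq : ∀ x ∈ Icc 0 b, h x ≤ 1 + ∫ y in (0:ℝ)..x, g y * h y)
    (n : ℕ) (hn : (∫ y in (0:ℝ)..b, g y) ≤ n / 2) :
    ∀ x ∈ Icc 0 b, h x ≤ 3 ^ n := by
  have hgh : IntegrableOn (fun y => g y * h y) (Icc 0 b) :=
    hg.mul_continuousOn hh isCompact_Icc
  have hint : ∀ c d : ℝ, c ∈ Icc 0 b → d ∈ Icc 0 b →
      IntervalIntegrable (fun y => g y * h y) volume c d := by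
    intro c d hc hd
    exact (hgh.mono_set (uIcc_subset_Icc hc hd)).intervalIntegrable
  have hgint : ∀ c d : ℝ, c ∈ Icc 0 b → d ∈ Icc 0 b →
      IntervalIntegrable g volume c d := by
    intro c d hc hd
    exact (hg.mono_set (uIcc_subset_Icc hc hd)).intervalIntegrable
  set W : ℝ → ℝ := fun t => ∫ y in (0:ℝ)..t, g y with hW
  have hWc : ContinuousOn W (Icc 0 b) := by
    have := intervalIntegral.continuousOn_primitive_interval
      (f := g) (μ := volume) (a := (0:ℝ)) (b := b) (by rwa [uIcc_of_le hb])
    rwa [uIcc_of_le hb] at this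
  have hWmono : ∀ c d : ℝ, c ∈ Icc 0 b → d ∈ Icc 0 b → c ≤ d → W c ≤ W d := by
    intro c d hc hd hcd
    have hadd := intervalIntegral.integral_add_adjacent_intervals
      (hgint 0 c ⟨le_rfl, hb⟩ hc) (hgint c d hc hd)
    have hpos : 0 ≤ ∫ y in c..d, g y :=
      intervalIntegral.integral_nonneg hcd
        (fun u hu => hg0 u ⟨le_trans hc.1 hu.1, le_trans hu.2 hd.2⟩)
    simp only [hW]
    linarith [hadd]
  have key : ∀ c d : ℝ, c ∈ Icc 0 b → d ∈ Icc 0 b → c ≤ d → ∀ M : ℝ, 0 ≤ M →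
      (∀ y ∈ Icc c d, h y ≤ M) →
      (∫ y in c..d, g y * h y) ≤ M * ∫ y in c..d, g y := by
    intro c d hc hd hcd M hM hbd
    calc (∫ y in c..d, g y * h y) ≤ ∫ y in c..d, g y * M := by
          refine intervalIntegral.integral_mono_on hcd (hint c d hc hd)
            ((hgint c d hc hd).mul_const M) (fun y hy => ?_)
          exact mul_le_mul_of_nonneg_left (hbd y hy)
            (hg0 y ⟨le_trans hc.1 hy.1, le_trans hy.2 hd.2⟩)
      _ = M * ∫ y in c..d, g y := by
          rw [intervalIntegral.integral_mul_const]; ring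
  -- the global max of h
  obtain ⟨m₀, hm₀, hmax₀⟩ := isCompact_Icc.exists_isMaxOn (nonempty_Icc.mpr hb) hh
  have claim : ∀ k : ℕ, ∀ x ∈ Icc (0:ℝ) b, W x ≤ k / 2 →
      1 + (∫ y in (0:ℝ)..x, g y * h y) ≤ 3 ^ k := by
    intro k
    induction k with
    | zero =>
      intro x hx hWx
      have hWx0 : W x = 0 := by
        refine le_antisymm (by simpa using hWx) ?_
        simpa [hW] using intervalIntegral.integral_nonneg hx.1
          (fun u hu => hg0 u ⟨hu.1, le_trans hu.2 hx.2⟩)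
      have hH0 : 0 ≤ h m₀ := hh0 m₀ hm₀
      have := key 0 x ⟨le_rfl, hb⟩ hx hx.1 (h m₀) hH0
        (fun y hy => hmax₀ ⟨hy.1, le_trans hy.2 hx.2⟩)
      rw [show (∫ y in (0:ℝ)..x, g y) = W x from rfl, hWx0, mul_zero] at this
      simpa using this
    | succ k ih =>
      intro x hx hWx
      by_cases hcase : W x ≤ k / 2
      · calc 1 + (∫ y in (0:ℝ)..x, g y * h y) ≤ 3 ^ k := ih x hx hcase
          _ ≤ 3 ^ (k + 1) := by
              have : (0:ℝ) < 3 ^ k := by positivity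
              calc (3:ℝ) ^ k ≤ 3 * 3 ^ k := by linarith
                _ = 3 ^ (k + 1) := by ring
      · push_neg at hcase
        have hW0 : W 0 = 0 := by simp [hW]
        have hWcx : ContinuousOn W (Icc 0 x) :=
          hWc.mono (Icc_subset_Icc le_rfl hx.2)
        have hmem : (k / 2 : ℝ) ∈ Icc (W 0) (W x) :=
          ⟨by rw [hW0]; positivity, le_of_lt hcase⟩
        obtain ⟨c, hc, hWceq⟩ := intermediate_value_Icc hx.1 hWcx hmem
        have hcb : c ∈ Icc (0:ℝ) b := ⟨hc.1, le_trans hc.2 hx.2⟩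
        have ihc : 1 + (∫ y in (0:ℝ)..c, g y * h y) ≤ 3 ^ k :=
          ih c hcb (le_of_eq hWceq)
        -- mass on [c, x] is at most 1/2
        have haddg := intervalIntegral.integral_add_adjacent_intervals
          (hgint 0 c ⟨le_rfl, hb⟩ hcb) (hgint c x hcb hx)
        have hcx_half : (∫ y in c..x, g y) ≤ 1 / 2 := by
          have : W c + (∫ y in c..x, g y) = W x := haddg
          have hk : W x ≤ (k + 1) / 2 := by
            simpa [Nat.cast_succ] using hWx
          rw [hWceq] at this
          linarith
        have hsub : ∀ m ∈ Icc c x, (∫ y in c..m, g y) ≤ 1 / 2 := by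
          intro m hm
          have hmb : m ∈ Icc (0:ℝ) b := ⟨le_trans hc.1 hm.1, le_trans hm.2 hx.2⟩
          have hadd2 := intervalIntegral.integral_add_adjacent_intervals
            (hgint c m hcb hmb) (hgint m x hmb hx)
          have hpos : 0 ≤ ∫ y in m..x, g y :=
            intervalIntegral.integral_nonneg hm.2
              (fun u hu => hg0 u ⟨le_trans hc.1 (le_trans hm.1 hu.1), le_trans hu.2 hx.2⟩)
          linarith
        -- max of h on [c, x]
        obtain ⟨m, hm, hmaxm⟩ := isCompact_Icc.exists_isMaxOn (nonempty_Icc.mpr hc.2)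
          (hh.mono (Icc_subset_Icc hc.1 hx.2))
        have hmb : m ∈ Icc (0:ℝ) b := ⟨le_trans hc.1 hm.1, le_trans hm.2 hx.2⟩
        have hhm0 : 0 ≤ h m := hh0 m hmb
        have hkey_m := key c m hcb hmb hm.1 (h m) hhm0
          (fun y hy => hmaxm ⟨hy.1, le_trans hy.2 hm.2⟩)
        have haddh_m := intervalIntegral.integral_add_adjacent_intervals
          (hint 0 c ⟨le_rfl, hb⟩ hcb) (hint c m hcb hmb)
        have hbm : h m ≤ 2 * 3 ^ k := by
          have h1 : h m ≤ 1 + ∫ y in (0:ℝ)..m, g y * h y := hineq m hmb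
          have h2 : (∫ y in c..m, g y * h y) ≤ h m * (1 / 2) := by
            calc (∫ y in c..m, g y * h y) ≤ h m * ∫ y in c..m, g y := hkey_m
              _ ≤ h m * (1 / 2) := mul_le_mul_of_nonneg_left (hsub m hm) hhm0
          have h3 : (1:ℝ) + ∫ y in (0:ℝ)..m, g y * h y
              = (1 + ∫ y in (0:ℝ)..c, g y * h y) + ∫ y in c..m, g y * h y := by
            rw [← haddh_m]; ring
          linarith
        -- conclude
        have haddh_x := intervalIntegral.integral_add_adjacent_intervals
          (hint 0 c ⟨le_rfl, hb⟩ hcb) (hint c x hcb hx)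
        have hkey_x := key c x hcb hx hc.2 (2 * 3 ^ k) (by positivity)
          (fun y hy => le_trans (hmaxm hy) hbm)
        have h4 : (∫ y in c..x, g y * h y) ≤ (2 * 3 ^ k) * (1 / 2) := by
          calc (∫ y in c..x, g y * h y) ≤ (2 * 3 ^ k) * ∫ y in c..x, g y := hkey_x
            _ ≤ (2 * 3 ^ k) * (1 / 2) :=
                mul_le_mul_of_nonneg_left hcx_half (by positivity)
        have h5 : (3:ℝ) ^ (k + 1) = 3 * 3 ^ k := by ring
        linarith [haddh_x]
  intro x hx
  have hWxb : W x ≤ n / 2 := le_trans (hWmono x b hx ⟨hb, le_rfl⟩ hx.2) hn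
  exact le_trans (hineq x hx) (claim n x hx hWxb)

/-- The derivative of the solution satisfies
`∂ₓξ(x,z) = −√z sin(√z x) + ∫₀^x cos(√z (x−y)) V(y) ξ(y,z) dy` and the estimate
`|∂ₓξ(x,z) + √z sin(√z x)| ≤ C e^{|Im √z| x} ∫₀^x |V(y)| dy` on `[0,a]`. -/
theorem xi_derivative_formula_and_estimate
    (a : ℝ) (ha : 0 < a)
    (V : ℝ → ℝ)
    (hV : IntegrableOn V (Icc 0 a))
    (ξ ξ' : ℂ → ℝ → ℂ)
    (hξ0 : ∀ z, ξ z 0 = 1)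
    (hξ'0 : ∀ z, ξ' z 0 = 0)
    (hξd : ∀ z, ∀ x ∈ Icc (0:ℝ) a, HasDerivWithinAt (ξ z) (ξ' z x) (Icc 0 a) x)
    (hξd' : ∀ z, ∀ x ∈ Icc (0:ℝ) a,
      HasDerivWithinAt (ξ' z) (((V x : ℂ) - z) * ξ z x) (Icc 0 a) x)
    : (∀ z : ℂ, ∀ x ∈ Icc (0:ℝ) a,
        ξ' z x = -(z ^ (1/2 : ℂ)) * Complex.sin (z ^ (1/2 : ℂ) * x) +
          ∫ y in (0:ℝ)..x,
            Complex.cos (z ^ (1/2 : ℂ) * ((x : ℂ) - (y : ℂ))) * (V y : ℂ) * ξ z y) ∧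
      ∃ C > 0, ∀ z : ℂ, ∀ x ∈ Icc (0:ℝ) a,
        ‖ξ' z x + z ^ (1/2 : ℂ) * Complex.sin (z ^ (1/2 : ℂ) * x)‖ ≤
          C * Real.exp (|(z ^ (1/2 : ℂ)).im| * x) * ∫ y in (0:ℝ)..x, |V y| := by
  -- continuity of ξ and ξ'
  have hcont : ∀ z, ContinuousOn (ξ z) (Icc 0 a) :=
    fun z x hx => (hξd z x hx).continuousWithinAt
  have hcont' : ∀ z, ContinuousOn (ξ' z) (Icc 0 a) :=
    fun z x hx => (hξd' z x hx).continuousWithinAt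
  have hVc : IntegrableOn (fun y => (V y : ℂ)) (Icc 0 a) := hV.ofReal
  have hφint : ∀ z, IntegrableOn (fun y => (V y : ℂ) * ξ z y) (Icc 0 a) :=
    fun z => hVc.mul_continuousOn (hcont z) isCompact_Icc
  have ivφ : ∀ z, ∀ t ∈ Icc (0:ℝ) a,
      IntervalIntegrable (fun y => (V y : ℂ) * ξ z y) volume 0 t := by
    intro z t ht
    refine ((hφint z).mono_set ?_).intervalIntegrable
    rw [uIcc_of_le ht.1]
    exact Icc_subset_Icc le_rfl ht.2
  have ivξ : ∀ z, ∀ t ∈ Icc (0:ℝ) a, IntervalIntegrable (ξ z) volume 0 t := by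
    intro z t ht
    refine ContinuousOn.intervalIntegrable ?_
    rw [uIcc_of_le ht.1]
    exact (hcont z).mono (Icc_subset_Icc le_rfl ht.2)
  have ivξ' : ∀ z, ∀ t ∈ Icc (0:ℝ) a, IntervalIntegrable (ξ' z) volume 0 t := by
    intro z t ht
    refine ContinuousOn.intervalIntegrable ?_
    rw [uIcc_of_le ht.1]
    exact (hcont' z).mono (Icc_subset_Icc le_rfl ht.2)
  -- FTC for ξ'
  have L3 : ∀ z, ∀ x ∈ Icc (0:ℝ) a,
      ξ' z x = ∫ y in (0:ℝ)..x, ((V y : ℂ) - z) * ξ z y := by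
    intro z x hx
    have hint : IntervalIntegrable (fun y => ((V y : ℂ) - z) * ξ z y) volume 0 x := by
      have h1 : IntegrableOn (fun y => ((V y : ℂ) - z)) (Icc 0 a) := by
        refine hVc.sub ((integrableOn_const_iff (C := z)).mpr (Or.inr ?_))
        simp [lt_top_iff_ne_top]
      refine ((h1.mul_continuousOn (hcont z) isCompact_Icc).mono_set ?_).intervalIntegrable
      rw [uIcc_of_le hx.1]
      exact Icc_subset_Icc le_rfl hx.2
    have h := intervalIntegral.integral_eq_sub_of_hasDeriv_right_of_le hx.1
      ((hcont' z).mono (Icc_subset_Icc le_rfl hx.2))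
      (fun t ht => ((hξd' z t ⟨ht.1.le, ht.2.le.trans hx.2⟩).hasDerivAt
        (Icc_mem_nhds ht.1 (lt_of_lt_of_le ht.2 hx.2))).hasDerivWithinAt)
      hint
    rw [h, hξ'0 z, sub_zero]
  -- FTC for ξ
  have L4 : ∀ z, ∀ x ∈ Icc (0:ℝ) a,
      ξ z x = 1 + ∫ t in (0:ℝ)..x, ξ' z t := by
    intro z x hx
    have h := intervalIntegral.integral_eq_sub_of_hasDeriv_right_of_le hx.1
      ((hcont z).mono (Icc_subset_Icc le_rfl hx.2))
      (fun t ht => ((hξd z t ⟨ht.1.le, ht.2.le.trans hx.2⟩).hasDerivAt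
        (Icc_mem_nhds ht.1 (lt_of_lt_of_le ht.2 hx.2))).hasDerivWithinAt)
      (ivξ' z x hx)
    rw [h, hξ0 z]
    ring
  -- the derivative formula, with convenient grouping
  have formula' : ∀ z : ℂ, ∀ x ∈ Icc (0:ℝ) a,
      ξ' z x = -(z ^ (1/2 : ℂ)) * Complex.sin (z ^ (1/2 : ℂ) * x) +
        ∫ y in (0:ℝ)..x,
          Complex.cos (z ^ (1/2 : ℂ) * ((x : ℂ) - (y : ℂ))) * ((V y : ℂ) * ξ z y) := by
    intro z x hx
    set s : ℂ := z ^ (1/2 : ℂ) with hsdef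
    have hss : s * s = z := sqrt_mul_self_complex z
    set φ : ℝ → ℂ := fun y => (V y : ℂ) * ξ z y with hφdef
    set G : ℝ → ℂ := fun t => ∫ u in (0:ℝ)..t, ξ z u with hGdef
    have hsubx : Icc (0:ℝ) x ⊆ Icc 0 a := Icc_subset_Icc le_rfl hx.2
    have hux : uIcc (0:ℝ) x = Icc 0 x := uIcc_of_le hx.1
    -- continuity of G
    have hGcont : ContinuousOn G (Icc 0 a) := by
      have h1 : IntegrableOn (ξ z) (uIcc 0 a) := by
        rw [uIcc_of_le ha.le]
        exact (hcont z).integrableOn_Icc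
      have := intervalIntegral.continuousOn_primitive_interval (f := ξ z) (μ := volume)
        (a := (0:ℝ)) (b := a) h1
      rwa [uIcc_of_le ha.le] at this
    -- Φ identity
    have hΦ : ∀ t ∈ Icc (0:ℝ) x, (∫ y in (0:ℝ)..t, φ y) = ξ' z t + z * G t := by
      intro t ht
      have hta : t ∈ Icc (0:ℝ) a := ⟨ht.1, ht.2.trans hx.2⟩
      have hsplit : (∫ y in (0:ℝ)..t, ((V y : ℂ) - z) * ξ z y)
          = (∫ y in (0:ℝ)..t, φ y) - ∫ y in (0:ℝ)..t, z * ξ z y := by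
        rw [← intervalIntegral.integral_sub (ivφ z t hta) ((ivξ z t hta).const_mul z)]
        refine intervalIntegral.integral_congr fun y _ => ?_
        show ((V y : ℂ) - z) * ξ z y = (V y : ℂ) * ξ z y - z * ξ z y
        ring
      have h1 := L3 z t hta
      rw [hsplit, intervalIntegral.integral_const_mul] at h1
      linear_combination -h1
    -- elementary integral E1
    have E1 : ∀ y : ℝ, (∫ t in y..x, s * Complex.sin (s * ((x : ℂ) - (t : ℂ))))
        = 1 - Complex.cos (s * ((x : ℂ) - (y : ℂ))) := by
      intro y
      have hi : IntervalIntegrable (fun t : ℝ => s * Complex.sin (s * ((x:ℂ) - (t:ℂ))))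
          volume y x := by
        refine Continuous.intervalIntegrable ?_ _ _
        exact continuous_const.mul (Complex.continuous_sin.comp
          (continuous_const.mul (continuous_const.sub Complex.continuous_ofReal)))
      have h := intervalIntegral.integral_eq_sub_of_hasDerivAt
        (f := fun t : ℝ => Complex.cos (s * ((x:ℂ) - (t:ℂ))))
        (f' := fun t : ℝ => s * Complex.sin (s * ((x:ℂ) - (t:ℂ))))
        (fun t _ => hasDerivAt_cosker s (x:ℂ) t) hi
      rw [h]
      simp
    -- interval integrability of the cos-kernel times φ
    have hkerc : Continuous fun y : ℝ => Complex.cos (s * ((x:ℂ) - (y:ℂ))) :=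
      Complex.continuous_cos.comp (continuous_const.mul
        (continuous_const.sub Complex.continuous_ofReal))
    have hIint : IntervalIntegrable (fun y => Complex.cos (s * ((x:ℂ) - (y:ℂ))) * φ y)
        volume 0 x := (ivφ z x hx).continuousOn_mul hkerc.continuousOn
    set I : ℂ := ∫ y in (0:ℝ)..x, Complex.cos (s * ((x : ℂ) - (y : ℂ))) * φ y with hIdef
    set Q : ℂ := ∫ t in (0:ℝ)..x, Complex.cos (s * ((x : ℂ) - (t : ℂ))) * ξ z t with hQdef
    set T1 : ℂ := ∫ t in (0:ℝ)..x, (s * Complex.sin (s * ((x:ℂ) - (t:ℂ)))) * ξ' z t with hT1def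
    set T2 : ℂ := ∫ t in (0:ℝ)..x, (s * Complex.sin (s * ((x:ℂ) - (t:ℂ)))) * G t with hT2def
    have hkers : Continuous fun t : ℝ => s * Complex.sin (s * ((x:ℂ) - (t:ℂ))) :=
      continuous_const.mul (Complex.continuous_sin.comp
        (continuous_const.mul (continuous_const.sub Complex.continuous_ofReal)))
    -- step A
    have hΦx : (∫ y in (0:ℝ)..x, φ y) = ξ' z x + z * G x := hΦ x ⟨hx.1, le_rfl⟩
    -- B1 : subtract
    have B1 : (∫ y in (0:ℝ)..x, φ y) - I
        = ∫ y in (0:ℝ)..x, (∫ t in y..x, s * Complex.sin (s * ((x:ℂ) - (t:ℂ)))) * φ y := by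
      rw [hIdef, ← intervalIntegral.integral_sub (ivφ z x hx) hIint]
      refine intervalIntegral.integral_congr fun y _ => ?_
      rw [E1 y]
      ring
    -- B2 : Fubini on the triangle
    have B2 : (∫ y in (0:ℝ)..x, (∫ t in y..x, s * Complex.sin (s * ((x:ℂ) - (t:ℂ)))) * φ y)
        = ∫ t in (0:ℝ)..x, (s * Complex.sin (s * ((x:ℂ) - (t:ℂ)))) * ∫ y in (0:ℝ)..t, φ y := by
      have hsw := triangle_swap x hx.1 (fun t _ => s * Complex.sin (s * ((x:ℂ) - (t:ℂ))))
        (hkers.comp continuous_fst) φ ((hφint z).mono_set hsubx)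
      rw [hsw]
      refine intervalIntegral.integral_congr fun t _ => ?_
      rw [intervalIntegral.integral_const_mul]
    -- B3 : split the inner integral using hΦ
    have B3 : (∫ t in (0:ℝ)..x, (s * Complex.sin (s * ((x:ℂ) - (t:ℂ)))) * ∫ y in (0:ℝ)..t, φ y)
        = T1 + z * T2 := by
      have hstep : (∫ t in (0:ℝ)..x,
            (s * Complex.sin (s * ((x:ℂ) - (t:ℂ)))) * ∫ y in (0:ℝ)..t, φ y)
          = ∫ t in (0:ℝ)..x, ((s * Complex.sin (s * ((x:ℂ) - (t:ℂ)))) * ξ' z t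
              + z * ((s * Complex.sin (s * ((x:ℂ) - (t:ℂ)))) * G t)) := by
        refine intervalIntegral.integral_congr fun t ht => ?_
        rw [hux] at ht
        rw [hΦ t ht]
        ring
      rw [hstep, intervalIntegral.integral_add, intervalIntegral.integral_const_mul]
      · refine ((ivξ' z x hx).continuousOn_mul hkers.continuousOn)
      · refine IntervalIntegrable.const_mul ?_ z
        refine ContinuousOn.intervalIntegrable ?_
        refine (hkers.continuousOn).mul ?_
        rw [hux]
        exact hGcont.mono hsubx
    -- integration by parts, T1
    have hT1 : T1 = -(s * Complex.sin (s * (x:ℂ))) + (s * s) * Q := by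
      have hibp := intervalIntegral.integral_deriv_mul_eq_sub_of_hasDeriv_right
        (a := (0:ℝ)) (b := x)
        (u := fun t : ℝ => s * Complex.sin (s * ((x:ℂ) - (t:ℂ))))
        (v := ξ z)
        (u' := fun t : ℝ => -(s * s) * Complex.cos (s * ((x:ℂ) - (t:ℂ))))
        (v' := ξ' z)
        (hkers.continuousOn)
        (by rw [hux]; exact (hcont z).mono hsubx)
        (fun t ht => by
          rw [min_eq_left hx.1, max_eq_right hx.1] at ht
          exact (hasDerivAt_sinker s (x:ℂ) t).hasDerivWithinAt)
        (fun t ht => by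
          rw [min_eq_left hx.1, max_eq_right hx.1] at ht
          exact (((hξd z t ⟨ht.1.le, ht.2.le.trans hx.2⟩).hasDerivAt
            (Icc_mem_nhds ht.1 (lt_of_lt_of_le ht.2 hx.2)))).hasDerivWithinAt)
        (Continuous.intervalIntegrable
          (continuous_const.mul hkerc) _ _)
        (ivξ' z x hx)
      have hsplit : (∫ t in (0:ℝ)..x,
            (-(s * s) * Complex.cos (s * ((x:ℂ) - (t:ℂ))) * ξ z t
              + (s * Complex.sin (s * ((x:ℂ) - (t:ℂ)))) * ξ' z t))
          = -(s * s) * Q + T1 := by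
        rw [intervalIntegral.integral_add
          (((ivξ z x hx).continuousOn_mul (continuous_const.mul hkerc).continuousOn : IntervalIntegrable (fun t : ℝ => -(s * s) * Complex.cos (s * ((x:ℂ) - (t:ℂ))) * ξ z t) volume 0 x))
          (((ivξ' z x hx).continuousOn_mul hkers.continuousOn))]
        congr 1
        rw [hQdef, ← intervalIntegral.integral_const_mul]
        refine intervalIntegral.integral_congr fun t _ => ?_
        ring
      rw [hsplit] at hibp
      have hends : (fun t : ℝ => s * Complex.sin (s * ((x:ℂ) - (t:ℂ)))) x * ξ z x
          - (fun t : ℝ => s * Complex.sin (s * ((x:ℂ) - (t:ℂ)))) 0 * ξ z 0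
          = -(s * Complex.sin (s * (x:ℂ))) := by
        simp [hξ0 z]
      rw [hends] at hibp
      linear_combination hibp
    -- integration by parts, T2
    have hT2 : T2 = G x - Q := by
      have hibp := intervalIntegral.integral_deriv_mul_eq_sub_of_hasDeriv_right
        (a := (0:ℝ)) (b := x)
        (u := fun t : ℝ => Complex.cos (s * ((x:ℂ) - (t:ℂ))))
        (v := G)
        (u' := fun t : ℝ => s * Complex.sin (s * ((x:ℂ) - (t:ℂ))))
        (v' := ξ z)
        (hkerc.continuousOn)
        (by rw [hux]; exact hGcont.mono hsubx)
        (fun t ht => by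
          rw [min_eq_left hx.1, max_eq_right hx.1] at ht
          exact (hasDerivAt_cosker s (x:ℂ) t).hasDerivWithinAt)
        (fun t ht => by
          rw [min_eq_left hx.1, max_eq_right hx.1] at ht
          have hta : t ∈ Ioo (0:ℝ) a := ⟨ht.1, lt_of_lt_of_le ht.2 hx.2⟩
          refine (intervalIntegral.integral_hasDerivAt_right
            (ivξ z t ⟨ht.1.le, hta.2.le⟩)
            (ContinuousOn.stronglyMeasurableAtFilter isOpen_Ioo
              ((hcont z).mono Ioo_subset_Icc_self) t hta)
            (((hcont z).continuousAt (Icc_mem_nhds hta.1 hta.2)))).hasDerivWithinAt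
        )
        (Continuous.intervalIntegrable hkers _ _)
        (ivξ z x hx)
      have hsplit : (∫ t in (0:ℝ)..x,
            ((s * Complex.sin (s * ((x:ℂ) - (t:ℂ)))) * G t
              + Complex.cos (s * ((x:ℂ) - (t:ℂ))) * ξ z t))
          = T2 + Q := by
        rw [intervalIntegral.integral_add ?h1 ?h2]
        case h1 =>
          refine ContinuousOn.intervalIntegrable ?_
          refine (hkers.continuousOn).mul ?_
          rw [hux]
          exact hGcont.mono hsubx
        case h2 => exact ((ivξ z x hx).continuousOn_mul hkerc.continuousOn)
      rw [hsplit] at hibp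
      have hends : (fun t : ℝ => Complex.cos (s * ((x:ℂ) - (t:ℂ)))) x * G x
          - (fun t : ℝ => Complex.cos (s * ((x:ℂ) - (t:ℂ)))) 0 * G 0
          = G x := by
        have hG0 : G 0 = 0 := intervalIntegral.integral_same
        simp [hG0]
      rw [hends] at hibp
      linear_combination hibp
    -- assemble
    have hJ : (∫ y in (0:ℝ)..x, φ y) - I = T1 + z * T2 := by
      rw [B1, B2, B3]
    linear_combination -hΦx + hJ + hT1 + z * hT2 + Q * hss
  constructor
  · intro z x hx
    have h := formula' z x hx
    rw [h]
    congr 1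
    refine intervalIntegral.integral_congr fun y _ => ?_
    ring
  · -- the estimate
    set Γ : ℝ := ∫ y in (0:ℝ)..a, |V y| with hΓdef
    have hΓ0 : 0 ≤ Γ :=
      intervalIntegral.integral_nonneg ha.le (fun u _ => abs_nonneg _)
    set n : ℕ := ⌈2 * a * Γ⌉₊ with hndef
    have hVabs : IntegrableOn (fun y => |V y|) (Icc 0 a) := by
      exact (by simpa using hV.norm : Integrable (fun y => |V y|) (volume.restrict (Icc 0 a)))
    have ivVabs : ∀ x ∈ Icc (0:ℝ) a, IntervalIntegrable (fun y => |V y|) volume 0 x := by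
      intro x hx
      refine (hVabs.mono_set ?_).intervalIntegrable
      rw [uIcc_of_le hx.1]
      exact Icc_subset_Icc le_rfl hx.2
    -- the uniform a priori bound on ξ
    have hbound : ∀ z : ℂ, ∀ y ∈ Icc (0:ℝ) a,
        ‖ξ z y‖ ≤ 3 ^ n * Real.exp (|(z ^ (1/2:ℂ)).im| * y) := by
      intro z
      set s : ℂ := z ^ (1/2:ℂ) with hsdef
      set τ : ℝ := |s.im| with hτdef
      have hτ0 : 0 ≤ τ := abs_nonneg _
      set φ : ℝ → ℂ := fun y => (V y : ℂ) * ξ z y with hφdef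
      set g : ℝ → ℝ := fun y => a * |V y| with hgdef
      set h : ℝ → ℝ := fun y => ‖ξ z y‖ * Real.exp (-(τ * y)) with hhdef
      have hg_int : IntegrableOn g (Icc 0 a) := hVabs.const_mul a
      have hh_cont : ContinuousOn h (Icc 0 a) := by
        refine ((hcont z).norm.mul ?_)
        exact (Real.continuous_exp.comp (continuous_const.mul continuous_id).neg).continuousOn
      have hineq : ∀ x ∈ Icc (0:ℝ) a, h x ≤ 1 + ∫ y in (0:ℝ)..x, g y * h y := by
        intro x hx
        have hsubx : Icc (0:ℝ) x ⊆ Icc 0 a := Icc_subset_Icc le_rfl hx.2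
        have hux : uIcc (0:ℝ) x = Icc 0 x := uIcc_of_le hx.1
        have hkerC : Continuous (Function.uncurry
            fun t y : ℝ => Complex.cos (s * ((t:ℂ) - (y:ℂ)))) := by
          refine Complex.continuous_cos.comp ?_
          exact continuous_const.mul
            ((Complex.continuous_ofReal.comp continuous_fst).sub
              (Complex.continuous_ofReal.comp continuous_snd))
        have hsin_cont : Continuous fun t : ℝ => -(s * Complex.sin (s * (t:ℂ))) :=
          (continuous_const.mul (Complex.continuous_sin.comp
            (continuous_const.mul Complex.continuous_ofReal))).neg
        have eq1 : ξ z x = Complex.cos (s * (x:ℂ)) +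
            ∫ y in (0:ℝ)..x, (∫ t in y..x, Complex.cos (s * ((t:ℂ) - (y:ℂ)))) * φ y := by
          have h4 := L4 z x hx
          have e0 : (∫ t in (0:ℝ)..x, ξ' z t)
              = (∫ t in (0:ℝ)..x, -(s * Complex.sin (s * (t:ℂ))))
                + ∫ t in (0:ℝ)..x, (ξ' z t + s * Complex.sin (s * (t:ℂ))) := by
            have hi1 : IntervalIntegrable (fun t : ℝ => -(s * Complex.sin (s * (t:ℂ))))
                volume 0 x := hsin_cont.intervalIntegrable _ _
            have hi2 : IntervalIntegrable
                (fun t : ℝ => ξ' z t + s * Complex.sin (s * (t:ℂ))) volume 0 x := by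
              refine (ivξ' z x hx).add ?_
              exact (continuous_const.mul (Complex.continuous_sin.comp
                (continuous_const.mul Complex.continuous_ofReal))).intervalIntegrable _ _
            rw [← intervalIntegral.integral_add hi1 hi2]
            refine intervalIntegral.integral_congr fun t _ => ?_
            ring
          have e1 : (∫ t in (0:ℝ)..x, -(s * Complex.sin (s * (t:ℂ))))
              = Complex.cos (s * (x:ℂ)) - 1 := by
            have hd := intervalIntegral.integral_eq_sub_of_hasDerivAt
              (a := (0:ℝ)) (b := x)
              (f := fun t : ℝ => Complex.cos (s * (t:ℂ)))
              (f' := fun t : ℝ => -(s * Complex.sin (s * (t:ℂ))))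
              (fun t _ => by simpa using hasDerivAt_coslin s t)
              (hsin_cont.intervalIntegrable _ _)
            rw [hd]
            simp
          have e2 : (∫ t in (0:ℝ)..x, (ξ' z t + s * Complex.sin (s * (t:ℂ))))
              = ∫ t in (0:ℝ)..x, ∫ y in (0:ℝ)..t, Complex.cos (s * ((t:ℂ) - (y:ℂ))) * φ y := by
            refine intervalIntegral.integral_congr fun t ht => ?_
            rw [hux] at ht
            have hf := formula' z t ⟨ht.1, ht.2.trans hx.2⟩
            linear_combination hf
          have e3 := triangle_swap x hx.1
            (fun t y => Complex.cos (s * ((t:ℂ) - (y:ℂ)))) hkerC φ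
            ((hφint z).mono_set hsubx)
          rw [h4, e0, e1, e2, ← e3]
          ring
        -- pointwise bound on the integrand
        have hIoc : Set.uIoc (0:ℝ) x = Ioc 0 x := uIoc_of_le hx.1
        have hpt : ∀ᵐ (y : ℝ) ∂volume.restrict (Set.uIoc (0:ℝ) x),
            ‖(∫ t in y..x, Complex.cos (s * ((t:ℂ) - (y:ℂ)))) * φ y‖
              ≤ Real.exp (τ * x) * (g y * h y) := by
          rw [hIoc]
          filter_upwards [ae_restrict_mem measurableSet_Ioc] with y hy
          have hy0 : 0 ≤ y := hy.1.le
          have hyx : y ≤ x := hy.2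
          have hker : ‖∫ t in y..x, Complex.cos (s * ((t:ℂ) - (y:ℂ)))‖
              ≤ a * Real.exp (τ * (x - y)) := by
            have hbd : ∀ t ∈ Set.uIoc y x, ‖Complex.cos (s * ((t:ℂ) - (y:ℂ)))‖
                ≤ Real.exp (τ * (x - y)) := by
              intro t ht
              rw [uIoc_of_le hyx] at ht
              refine le_trans (norm_complex_cos_le _) (Real.exp_le_exp.mpr ?_)
              have him : (s * ((t:ℂ) - (y:ℂ))).im = s.im * (t - y) := by
                rw [← Complex.ofReal_sub]
                simp [Complex.mul_im]
              rw [him, abs_mul, abs_of_nonneg (by linarith [ht.1] : (0:ℝ) ≤ t - y)]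
              have : |s.im| * (t - y) ≤ |s.im| * (x - y) := by
                have := ht.2
                nlinarith [abs_nonneg s.im]
              simpa [hτdef] using this
            calc ‖∫ t in y..x, Complex.cos (s * ((t:ℂ) - (y:ℂ)))‖
                ≤ Real.exp (τ * (x - y)) * |x - y| :=
                  intervalIntegral.norm_integral_le_of_norm_le_const hbd
              _ ≤ Real.exp (τ * (x - y)) * a := by
                  rw [abs_of_nonneg (by linarith : (0:ℝ) ≤ x - y)]
                  have : x - y ≤ a := by
                    have := hx.2
                    linarith
                  exact mul_le_mul_of_nonneg_left this (Real.exp_pos _).le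
              _ = a * Real.exp (τ * (x - y)) := by ring
          have hφnorm : ‖φ y‖ = |V y| * ‖ξ z y‖ := by
            rw [hφdef]
            simp [norm_mul, Complex.norm_real]
          calc ‖(∫ t in y..x, Complex.cos (s * ((t:ℂ) - (y:ℂ)))) * φ y‖
              = ‖∫ t in y..x, Complex.cos (s * ((t:ℂ) - (y:ℂ)))‖ * ‖φ y‖ := norm_mul _ _
            _ ≤ (a * Real.exp (τ * (x - y))) * ‖φ y‖ :=
                mul_le_mul_of_nonneg_right hker (norm_nonneg _)
            _ = Real.exp (τ * x) * (g y * h y) := by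
                rw [hφnorm, hgdef, hhdef]
                have hexp : Real.exp (τ * (x - y))
                    = Real.exp (τ * x) * Real.exp (-(τ * y)) := by
                  rw [← Real.exp_add]
                  ring_nf
                rw [hexp]
                ring
        have hgh_int : IntervalIntegrable (fun y => Real.exp (τ * x) * (g y * h y))
            volume 0 x := by
          refine IntervalIntegrable.const_mul ?_ _
          refine ((hg_int.mul_continuousOn hh_cont isCompact_Icc).mono_set ?_).intervalIntegrable
          rw [hux]
          exact hsubx
        have hnormint : ‖∫ y in (0:ℝ)..x,
              (∫ t in y..x, Complex.cos (s * ((t:ℂ) - (y:ℂ)))) * φ y‖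
            ≤ Real.exp (τ * x) * ∫ y in (0:ℝ)..x, g y * h y := by
          refine le_trans (intervalIntegral.norm_integral_le_abs_of_norm_le hpt hgh_int) ?_
          rw [intervalIntegral.integral_const_mul]
          rw [abs_of_nonneg]
          refine mul_nonneg (Real.exp_pos _).le ?_
          refine intervalIntegral.integral_nonneg hx.1 fun u hu => ?_
          have hu' : u ∈ Icc (0:ℝ) a := ⟨hu.1, hu.2.trans hx.2⟩
          have : 0 ≤ g u := by rw [hgdef]; positivity
          have : 0 ≤ h u := by rw [hhdef]; positivity
          positivity
        have hcosx : ‖Complex.cos (s * (x:ℂ))‖ ≤ Real.exp (τ * x) := by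
          refine le_trans (norm_complex_cos_le _) (Real.exp_le_exp.mpr ?_)
          have him : (s * (x:ℂ)).im = s.im * x := by simp [Complex.mul_im]
          rw [him, abs_mul, abs_of_nonneg hx.1]
        have hmain : ‖ξ z x‖ ≤ Real.exp (τ * x) * (1 + ∫ y in (0:ℝ)..x, g y * h y) := by
          calc ‖ξ z x‖ ≤ ‖Complex.cos (s * (x:ℂ))‖ + ‖∫ y in (0:ℝ)..x,
                (∫ t in y..x, Complex.cos (s * ((t:ℂ) - (y:ℂ)))) * φ y‖ := by
                rw [eq1]; exact norm_add_le _ _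
            _ ≤ Real.exp (τ * x) + Real.exp (τ * x) * ∫ y in (0:ℝ)..x, g y * h y :=
                add_le_add hcosx hnormint
            _ = Real.exp (τ * x) * (1 + ∫ y in (0:ℝ)..x, g y * h y) := by ring
        calc h x = ‖ξ z x‖ * Real.exp (-(τ * x)) := rfl
          _ ≤ (Real.exp (τ * x) * (1 + ∫ y in (0:ℝ)..x, g y * h y)) * Real.exp (-(τ * x)) :=
              mul_le_mul_of_nonneg_right hmain (Real.exp_pos _).le
          _ = (Real.exp (τ * x) * Real.exp (-(τ * x))) *
              (1 + ∫ y in (0:ℝ)..x, g y * h y) := by ring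
          _ = 1 + ∫ y in (0:ℝ)..x, g y * h y := by
              rw [← Real.exp_add]
              simp
      have hn : (∫ y in (0:ℝ)..a, g y) ≤ (n : ℝ) / 2 := by
        have hgint : (∫ y in (0:ℝ)..a, g y) = a * Γ := by
          rw [hΓdef, hgdef, intervalIntegral.integral_const_mul]
        have hceil : (2 * a * Γ : ℝ) ≤ (n : ℝ) := by
          rw [hndef]
          exact Nat.le_ceil _
        rw [hgint]
        linarith
      have hgron := gronwall_aux a ha.le g h hg_int
        (fun y _ => by rw [hgdef]; positivity) hh_cont
        (fun y _ => by rw [hhdef]; positivity) hineq n hn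
      intro y hy
      have h2 := hgron y hy
      have h3 := mul_le_mul_of_nonneg_right h2 (Real.exp_pos (τ * y)).le
      calc ‖ξ z y‖ = (‖ξ z y‖ * Real.exp (-(τ * y))) * Real.exp (τ * y) := by
            rw [mul_assoc, ← Real.exp_add]
            simp
        _ ≤ 3 ^ n * Real.exp (τ * y) := h3
    -- the estimate itself
    refine ⟨(3:ℝ) ^ n, by positivity, fun z x hx => ?_⟩
    set s : ℂ := z ^ (1/2:ℂ) with hsdef
    set τ : ℝ := |s.im| with hτdef
    have hτ0 : 0 ≤ τ := abs_nonneg _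
    have hf := formula' z x hx
    have heq : ξ' z x + s * Complex.sin (s * (x:ℂ))
        = ∫ y in (0:ℝ)..x, Complex.cos (s * ((x:ℂ) - (y:ℂ))) * ((V y : ℂ) * ξ z y) := by
      rw [hf]; ring
    rw [heq]
    have hIoc : Set.uIoc (0:ℝ) x = Ioc 0 x := uIoc_of_le hx.1
    have hpt2 : ∀ᵐ (y : ℝ) ∂volume.restrict (Set.uIoc (0:ℝ) x),
        ‖Complex.cos (s * ((x:ℂ) - (y:ℂ))) * ((V y : ℂ) * ξ z y)‖
          ≤ |V y| * (3 ^ n * Real.exp (τ * x)) := by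
      rw [hIoc]
      filter_upwards [ae_restrict_mem measurableSet_Ioc] with y hy
      have hy0 : 0 ≤ y := hy.1.le
      have hyx : y ≤ x := hy.2
      have hcos : ‖Complex.cos (s * ((x:ℂ) - (y:ℂ)))‖ ≤ Real.exp (τ * (x - y)) := by
        refine le_trans (norm_complex_cos_le _) (Real.exp_le_exp.mpr ?_)
        have him : (s * ((x:ℂ) - (y:ℂ))).im = s.im * (x - y) := by
          rw [← Complex.ofReal_sub]
          simp [Complex.mul_im]
        rw [him, abs_mul, abs_of_nonneg (by linarith : (0:ℝ) ≤ x - y)]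
      have hξb : ‖ξ z y‖ ≤ 3 ^ n * Real.exp (τ * y) :=
        hbound z y ⟨hy0, hyx.trans hx.2⟩
      calc ‖Complex.cos (s * ((x:ℂ) - (y:ℂ))) * ((V y : ℂ) * ξ z y)‖
          = ‖Complex.cos (s * ((x:ℂ) - (y:ℂ)))‖ * (|V y| * ‖ξ z y‖) := by
            rw [norm_mul, norm_mul, Complex.norm_real]
            simp [Real.norm_eq_abs]
        _ ≤ Real.exp (τ * (x - y)) * (|V y| * (3 ^ n * Real.exp (τ * y))) := by
            refine mul_le_mul hcos ?_ (by positivity) (Real.exp_pos _).le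
            exact mul_le_mul_of_nonneg_left hξb (abs_nonneg _)
        _ = |V y| * (3 ^ n * (Real.exp (τ * (x - y)) * Real.exp (τ * y))) := by ring
        _ = |V y| * (3 ^ n * Real.exp (τ * x)) := by
            rw [← Real.exp_add]
            ring_nf
    have hVint2 : IntervalIntegrable (fun y => |V y| * (3 ^ n * Real.exp (τ * x)))
        volume 0 x := (ivVabs x hx).mul_const _
    calc ‖∫ y in (0:ℝ)..x, Complex.cos (s * ((x:ℂ) - (y:ℂ))) * ((V y : ℂ) * ξ z y)‖
        ≤ |∫ y in (0:ℝ)..x, |V y| * (3 ^ n * Real.exp (τ * x))| :=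
          intervalIntegral.norm_integral_le_abs_of_norm_le hpt2 hVint2
      _ = ∫ y in (0:ℝ)..x, |V y| * (3 ^ n * Real.exp (τ * x)) := by
          refine abs_of_nonneg (intervalIntegral.integral_nonneg hx.1 fun u _ => ?_)
          positivity
      _ = (∫ y in (0:ℝ)..x, |V y|) * (3 ^ n * Real.exp (τ * x)) :=
          intervalIntegral.integral_mul_const _ _
      _ = 3 ^ n * Real.exp (τ * x) * ∫ y in (0:ℝ)..x, |V y| := by ring
end

section
/- Let a ∈ (0,π). For every n ∈ ℕ ∪ {0} and every z ∈ ℂ \ {n²}: ∫₀^π cos(√z x) R_{aπ}(x) cos(nx) dx = (1/(2(π−a))) · [ (cos((√z+n)a) − (−1)ⁿ cos(√z π))/(√z+n)² + (cos((√z−n)a) − (−1)ⁿ cos(√z π))/(√z−n)² ]. -/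
open MeasureTheory Real Set

lemma aux_cont (a : ℝ) (haπ : a < π) : Continuous (fun x : ℝ => (↑(if x ≤ a then (1:ℝ) else (π - x) / (π - a)) : ℂ)) := by
  apply Complex.continuous_ofReal.comp
  apply Continuous.if_le continuous_const ((continuous_const.sub continuous_id).div_const _)
    continuous_id continuous_const
  intro x hx
  simp only [Pi.sub_apply, id] at hx ⊢
  rw [hx, div_self (sub_ne_zero.mpr (ne_of_gt haπ))]

lemma alg_deriv (C S c P X A : ℂ) (hc : c ≠ 0) (hd : P - A ≠ 0) :
    C * ((P - X) / (P - A)) =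
      (-1 * (S / c) + (P - X) * (C * c / c) - -S * c / c ^ 2) / (P - A) := by
  field_simp
  ring

lemma alg_comb (S S2 C1 C2 c P A : ℂ) (hc : c ≠ 0) (hd : P - A ≠ 0) :
    S / c + (((P - P) * (S2 / c) - C2 / c ^ 2) / (P - A) -
        ((P - A) * (S / c) - C1 / c ^ 2) / (P - A)) = (C1 - C2) / (c ^ 2 * (P - A)) := by
  rw [div_sub_div_same, div_add_div _ _ hc hd,
    div_eq_div_iff (mul_ne_zero hc hd) (mul_ne_zero (pow_ne_zero 2 hc) hd)]
  field_simp
  ring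

lemma aux_J (a : ℝ) (ha0 : 0 < a) (haπ : a < π) (c : ℂ) (hc : c ≠ 0) :
    (∫ x in (0:ℝ)..π, Complex.cos (c * x) *
        (↑(if x ≤ a then (1:ℝ) else (π - x) / (π - a)) : ℂ)) =
      (Complex.cos (c * a) - Complex.cos (c * π)) / (c ^ 2 * ((π:ℂ) - a)) := by
  have hπa : (π : ℝ) - a ≠ 0 := sub_ne_zero.mpr (ne_of_gt haπ)
  have hπaC : ((π:ℂ) - a) ≠ 0 := by
    have := Complex.ofReal_ne_zero.mpr hπa
    push_cast at this ⊢
    exact this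
  have hcont : Continuous (fun x : ℝ => Complex.cos (c * x) *
      (↑(if x ≤ a then (1:ℝ) else (π - x) / (π - a)) : ℂ)) :=
    (Complex.continuous_cos.comp (continuous_const.mul Complex.continuous_ofReal)).mul (aux_cont a haπ)
  have hx1 : ∀ x : ℝ, HasDerivAt (fun x : ℝ => (x : ℂ)) 1 x := fun x => by
    simpa using (hasDerivAt_id x).ofReal_comp
  have hmul : ∀ x : ℝ, HasDerivAt (fun x : ℝ => c * (x : ℂ)) c x := fun x => by
    simpa using (hx1 x).const_mul c
  have hsin : ∀ x : ℝ, HasDerivAt (fun x : ℝ => Complex.sin (c * x)) (Complex.cos (c * x) * c) x :=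
    fun x => (Complex.hasDerivAt_sin _).comp x (hmul x)
  have hcos : ∀ x : ℝ, HasDerivAt (fun x : ℝ => Complex.cos (c * x)) (-Complex.sin (c * x) * c) x :=
    fun x => (Complex.hasDerivAt_cos _).comp x (hmul x)
  have hsplit := intervalIntegral.integral_add_adjacent_intervals (a := (0:ℝ)) (b := a) (c := π) (μ := volume)
    (f := fun x : ℝ => Complex.cos (c * x) * (↑(if x ≤ a then (1:ℝ) else (π - x) / (π - a)) : ℂ))
    (hcont.intervalIntegrable _ _) (hcont.intervalIntegrable _ _)
  rw [← hsplit]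
  have e1 : (∫ x in (0:ℝ)..a, Complex.cos (c * x) *
      (↑(if x ≤ a then (1:ℝ) else (π - x) / (π - a)) : ℂ)) = ∫ x in (0:ℝ)..a, Complex.cos (c * x) := by
    apply intervalIntegral.integral_congr
    intro x hx
    rw [uIcc_of_le ha0.le] at hx
    simp only
    rw [if_pos hx.2]
    simp
  have e2 : (∫ x in a..π, Complex.cos (c * x) *
      (↑(if x ≤ a then (1:ℝ) else (π - x) / (π - a)) : ℂ)) =
      ∫ x in a..π, Complex.cos (c * x) * (((π:ℂ) - x) / ((π:ℂ) - a)) := by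
    apply intervalIntegral.integral_congr
    intro x hx
    rw [uIcc_of_le haπ.le] at hx
    simp only
    by_cases h : x ≤ a
    · have hxa : x = a := le_antisymm h hx.1
      rw [if_pos h, hxa, div_self hπaC]
      simp
    · rw [if_neg h]
      push_cast
      ring
  rw [e1, e2]
  have v1 : (∫ x in (0:ℝ)..a, Complex.cos (c * x)) = Complex.sin (c * a) / c := by
    have := intervalIntegral.integral_eq_sub_of_hasDerivAt
      (f := fun x : ℝ => Complex.sin (c * x) / c)
      (f' := fun x : ℝ => Complex.cos (c * x))
      (a := (0:ℝ)) (b := a)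
      (fun x _ => by simpa [mul_div_cancel_right₀ _ hc] using (hsin x).div_const c)
      ((Complex.continuous_cos.comp (continuous_const.mul Complex.continuous_ofReal)).intervalIntegrable _ _)
    simpa using this
  have hF : ∀ x : ℝ, HasDerivAt
      (fun x : ℝ => (((π:ℂ) - x) * (Complex.sin (c * x) / c) - Complex.cos (c * x) / c ^ 2) / ((π:ℂ) - a))
      (Complex.cos (c * x) * (((π:ℂ) - x) / ((π:ℂ) - a))) x := by
    intro x
    have hπx : HasDerivAt (fun x : ℝ => ((π:ℂ) - x)) (-1) x := by
      have h0 := (hasDerivAt_const x (π:ℂ)).sub (hx1 x)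
      simp only [zero_sub] at h0
      exact h0
    have h := (((hπx.mul ((hsin x).div_const c)).sub ((hcos x).div_const (c ^ 2))).div_const ((π:ℂ) - a))
    exact h.congr_deriv (alg_deriv _ _ _ _ _ _ hc hπaC).symm
  have v2 : (∫ x in a..π, Complex.cos (c * x) * (((π:ℂ) - x) / ((π:ℂ) - a))) =
      (((π:ℂ) - π) * (Complex.sin (c * π) / c) - Complex.cos (c * π) / c ^ 2) / ((π:ℂ) - a) -
        (((π:ℂ) - a) * (Complex.sin (c * a) / c) - Complex.cos (c * a) / c ^ 2) / ((π:ℂ) - a) := by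
    exact intervalIntegral.integral_eq_sub_of_hasDerivAt (a := a) (b := π)
      (fun x _ => hF x)
      (((Complex.continuous_cos.comp (continuous_const.mul Complex.continuous_ofReal)).mul
        ((continuous_const.sub Complex.continuous_ofReal).div_const _)).intervalIntegrable _ _)
  rw [v1, v2]
  exact alg_comb _ _ _ _ _ _ _ hc hπaC

lemma aux_cos_nat (n : ℕ) : Complex.cos ((n : ℂ) * π) = (-1 : ℂ) ^ n := by
  have : ((n : ℂ) * π) = ((n * π : ℝ) : ℂ) := by push_cast; ring
  rw [this, ← Complex.ofReal_cos]
  have := Real.cos_nat_mul_pi_sub 0 n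
  simp at this
  rw [this]
  push_cast
  ring

lemma aux_sin_nat (n : ℕ) : Complex.sin ((n : ℂ) * π) = 0 := by
  have : ((n : ℂ) * π) = ((n * π : ℝ) : ℂ) := by push_cast; ring
  rw [this, ← Complex.ofReal_sin, Real.sin_nat_mul_pi]
  simp

/-- Explicit value of `∫₀^π cos(√z x) R_{aπ}(x) cos(nx) dx` for `a ∈ (0,π)`,
`n ∈ ℕ ∪ {0}` and `z ∈ ℂ \ {n²}`. -/
theorem free_inner_product_formula
    (a : ℝ) (ha0 : 0 < a) (haπ : a < π) :
    ∀ n : ℕ, ∀ z : ℂ, z ≠ (n : ℂ) ^ 2 →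
      (∫ x in (0:ℝ)..π, Complex.cos (z ^ (1/2 : ℂ) * x) *
          (↑(if x ≤ a then (1:ℝ) else (π - x) / (π - a)) : ℂ) *
          Complex.cos ((n : ℂ) * x)) =
        (1 / (2 * ((π : ℂ) - (a : ℂ)))) *
          ((Complex.cos ((z ^ (1/2 : ℂ) + n) * a) -
              (-1 : ℂ) ^ n * Complex.cos (z ^ (1/2 : ℂ) * π)) /
              (z ^ (1/2 : ℂ) + n) ^ 2 +
            (Complex.cos ((z ^ (1/2 : ℂ) - n) * a) -
              (-1 : ℂ) ^ n * Complex.cos (z ^ (1/2 : ℂ) * π)) /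
              (z ^ (1/2 : ℂ) - n) ^ 2) := by
  intro n z hz
  set w := z ^ (1/2 : ℂ) with hw
  have hw2 : w ^ 2 = z := by
    rcases eq_or_ne z 0 with rfl | hz0
    · rw [hw, Complex.zero_cpow (by norm_num)]
      simp
    · rw [hw, sq, ← Complex.cpow_add _ _ hz0]
      norm_num
  have hwp : w + n ≠ 0 := by
    intro h
    apply hz
    rw [← hw2, show w = -n from by linear_combination h]
    ring
  have hwm : w - n ≠ 0 := by
    intro h
    apply hz
    rw [← hw2, show w = (n:ℂ) from by linear_combination h]
  have hπa : (π : ℝ) - a ≠ 0 := sub_ne_zero.mpr (ne_of_gt haπ)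
  have hπaC : ((π:ℂ) - a) ≠ 0 := by
    have := Complex.ofReal_ne_zero.mpr hπa
    push_cast at this ⊢
    exact this
  have key : ∀ x : ℝ, Complex.cos (w * x) *
      (↑(if x ≤ a then (1:ℝ) else (π - x) / (π - a)) : ℂ) * Complex.cos ((n : ℂ) * x) =
      (Complex.cos ((w + n) * x) * (↑(if x ≤ a then (1:ℝ) else (π - x) / (π - a)) : ℂ) +
       Complex.cos ((w - n) * x) * (↑(if x ≤ a then (1:ℝ) else (π - x) / (π - a)) : ℂ)) / 2 := by
    intro x
    rw [add_mul, sub_mul, Complex.cos_add, Complex.cos_sub]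
    ring
  rw [intervalIntegral.integral_congr (g := fun x : ℝ =>
      (Complex.cos ((w + n) * x) * (↑(if x ≤ a then (1:ℝ) else (π - x) / (π - a)) : ℂ) +
       Complex.cos ((w - n) * x) * (↑(if x ≤ a then (1:ℝ) else (π - x) / (π - a)) : ℂ)) / 2)
    (fun x _ => key x)]
  have hi : ∀ c : ℂ, IntervalIntegrable (fun x : ℝ => Complex.cos (c * x) *
      (↑(if x ≤ a then (1:ℝ) else (π - x) / (π - a)) : ℂ)) volume 0 π := fun c =>
    ((Complex.continuous_cos.comp (continuous_const.mul Complex.continuous_ofReal)).mul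
      (aux_cont a haπ)).intervalIntegrable _ _
  rw [intervalIntegral.integral_div, intervalIntegral.integral_add (hi _) (hi _),
    aux_J a ha0 haπ _ hwp, aux_J a ha0 haπ _ hwm]
  have c1 : Complex.cos ((w + n) * π) = (-1:ℂ) ^ n * Complex.cos (w * π) := by
    rw [add_mul, Complex.cos_add, aux_cos_nat, aux_sin_nat]
    ring
  have c2 : Complex.cos ((w - n) * π) = (-1:ℂ) ^ n * Complex.cos (w * π) := by
    rw [sub_mul, Complex.cos_sub, aux_cos_nat, aux_sin_nat]
    ring
  rw [c1, c2]
  have gen : ∀ X Y p q d : ℂ, p ≠ 0 → q ≠ 0 → d ≠ 0 →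
      (X / (p * d) + Y / (q * d)) / 2 = 1 / (2 * d) * (X / p + Y / q) := by
    intros X Y p q d hp hq hd
    field_simp
  exact gen _ _ _ _ _ (pow_ne_zero 2 hwp) (pow_ne_zero 2 hwm) hπaC
end

section
/- Let a ∈ (0,π). There exists a constant C > 0 (depending on V) such that for every z ∈ ℂ and every n ∈ ℕ: |∫₀^π F(x,z) R_{aπ}(x) cos(nx) dx| ≤ C (e^{π|Im √z|}/n²) (1 + (1 + |z|)/(1 + π|z|^{1/2})). -/
open MeasureTheory Real Set
namespace OversamplingAux

noncomputable def dot (a b : ℂ) : ℝ := a.re * b.re + a.im * b.im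

lemma dot_le (a b : ℂ) : dot a b ≤ ‖a‖ * ‖b‖ := by
  have h1 : ((starRingEnd ℂ) a * b).re ≤ ‖(starRingEnd ℂ) a * b‖ :=
    Complex.re_le_norm _
  simpa [dot, Complex.mul_re, norm_mul, Complex.norm_conj] using h1

lemma le_of_sq_le_sq {x y : ℝ} (hy : 0 ≤ y) (h : x^2 ≤ y^2) (hx : 0 ≤ x) : x ≤ y := by
  nlinarith

lemma eq_of_sq_eq_sq {x y : ℝ} (hx : 0 ≤ x) (hy : 0 ≤ y) (h : x^2 = y^2) : x = y := by
  nlinarith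

lemma hasDerivWithinAt_normSq {u : ℝ → ℂ} {d : ℂ} {s : Set ℝ} {x : ℝ}
    (hu : HasDerivWithinAt u d s x) :
    HasDerivWithinAt (fun t => Complex.normSq (u t)) (2 * dot (u x) d) s x := by
  have hre : HasDerivWithinAt (fun t => (u t).re) d.re s x :=
    Complex.reCLM.hasFDerivAt.comp_hasDerivWithinAt x hu
  have him : HasDerivWithinAt (fun t => (u t).im) d.im s x :=
    Complex.imCLM.hasFDerivAt.comp_hasDerivWithinAt x hu
  have h := (hre.mul hre).add (him.mul him)
  have heq : (fun t => (u t).re * (u t).re + (u t).im * (u t).im)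
      = fun t => Complex.normSq (u t) := by
    funext t; rw [Complex.normSq_apply]
  rw [show (((fun t => (u t).re) * fun t => (u t).re) + (fun t => (u t).im) * fun t => (u t).im)
    = fun t => (u t).re * (u t).re + (u t).im * (u t).im from rfl, heq] at h
  refine h.congr_deriv ?_
  simp only [dot]; ring

/-- Gronwall-type estimate on `[0, π]`. -/
lemma gronwall {e e' : ℝ → ℝ} {c b A : ℝ}
    (hd : ∀ x ∈ Icc (0:ℝ) π, HasDerivWithinAt e (e' x) (Icc 0 π) x)
    (hineq : ∀ x ∈ Ioo (0:ℝ) π, e' x ≤ c * e x + b * Real.exp (c * x))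
    (h0 : e 0 ≤ A) :
    ∀ x ∈ Icc (0:ℝ) π, e x ≤ (A + b * x) * Real.exp (c * x) := by
  set g : ℝ → ℝ := fun x => e x * Real.exp (-(c * x)) - b * x with hg
  have hcont : ContinuousOn e (Icc 0 π) := fun x hx => (hd x hx).continuousWithinAt
  have hexp : ∀ x : ℝ, HasDerivAt (fun y => Real.exp (-(c * y))) (-c * Real.exp (-(c * x))) x := by
    intro x
    have h1 : HasDerivAt (fun y : ℝ => -(c * y)) (-c) x := by
      exact (((hasDerivAt_id' x).const_mul c).neg).congr_deriv (by ring)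
    have h2 := (Real.hasDerivAt_exp (-(c*x))).comp x h1
    refine h2.congr_deriv ?_
    ring
  have hgd : ∀ x ∈ Ioo (0:ℝ) π,
      HasDerivAt g ((e' x - c * e x) * Real.exp (-(c*x)) - b) x := by
    intro x hx
    have hmem : Icc (0:ℝ) π ∈ nhds x := Icc_mem_nhds hx.1 hx.2
    have he : HasDerivAt e (e' x) x := (hd x (Ioo_subset_Icc_self hx)).hasDerivAt hmem
    have h2 : HasDerivAt (fun y : ℝ => b * y) b x := by simpa using (hasDerivAt_id x).const_mul b
    refine ((he.mul (hexp x)).sub h2).congr_deriv ?_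
    ring
  have hanti : AntitoneOn g (Icc 0 π) := by
    apply antitoneOn_of_deriv_nonpos (convex_Icc _ _)
    · apply ContinuousOn.sub
      · exact hcont.mul ((Real.continuous_exp.comp (by continuity)).continuousOn)
      · exact (continuous_const.mul continuous_id).continuousOn
    · rw [interior_Icc]
      intro x hx
      exact (hgd x hx).differentiableAt.differentiableWithinAt
    · rw [interior_Icc]
      intro x hx
      rw [(hgd x hx).deriv]
      have hE : (0:ℝ) < Real.exp (-(c*x)) := Real.exp_pos _
      have h1 : e' x - c * e x ≤ b * Real.exp (c*x) := by
        have := hineq x hx; linarith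
      have h2 : (e' x - c*e x) * Real.exp (-(c*x))
          ≤ b * Real.exp (c*x) * Real.exp (-(c*x)) :=
        mul_le_mul_of_nonneg_right h1 hE.le
      have key : Real.exp (c*x) * Real.exp (-(c*x)) = 1 := by
        rw [← Real.exp_add]; simp
      rw [mul_assoc, key, mul_one] at h2
      linarith
  intro x hx
  have h0mem : (0:ℝ) ∈ Icc (0:ℝ) π := ⟨le_rfl, Real.pi_pos.le⟩
  have hle : g x ≤ g 0 := hanti h0mem hx hx.1
  have hg0 : g 0 = e 0 := by simp [hg]
  have key : Real.exp (c*x) * Real.exp (-(c*x)) = 1 := by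
    rw [← Real.exp_add]; simp
  have hEx : (0:ℝ) < Real.exp (c*x) := Real.exp_pos _
  have : e x * Real.exp (-(c*x)) ≤ A + b * x := by
    have := hle; rw [hg0] at this; simp only [hg] at this; linarith
  calc e x = e x * Real.exp (-(c*x)) * Real.exp (c*x) := by
        rw [mul_assoc, mul_comm (Real.exp (-(c*x))), key, mul_one]
    _ ≤ (A + b * x) * Real.exp (c*x) := mul_le_mul_of_nonneg_right this hEx.le

/-- Integration by parts on a subinterval of `[0,π]`. -/
lemma ibp {u v u' v' : ℝ → ℂ} {α β : ℝ} (hαβ : α ≤ β) (h0 : 0 ≤ α) (hπ : β ≤ π)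
    (hu : ∀ x ∈ Ioo (0:ℝ) π, HasDerivAt u (u' x) x)
    (hv : ∀ x ∈ Ioo (0:ℝ) π, HasDerivAt v (v' x) x)
    (hcu : ContinuousOn u (Icc 0 π)) (hcv : ContinuousOn v (Icc 0 π))
    (hcu' : ContinuousOn u' (Icc 0 π)) (hcv' : ContinuousOn v' (Icc 0 π)) :
    ∫ x in α..β, u x * v' x
      = u β * v β - u α * v α - ∫ x in α..β, u' x * v x := by
  have hsub : Icc α β ⊆ Icc (0:ℝ) π := Icc_subset_Icc h0 hπ
  have hIoo : Ioo α β ⊆ Ioo (0:ℝ) π := Ioo_subset_Ioo h0 hπ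
  have hint1 : IntervalIntegrable (fun x => u' x * v x) volume α β :=
    (((hcu'.mono hsub).mul (hcv.mono hsub))).intervalIntegrable_of_Icc hαβ
  have hint2 : IntervalIntegrable (fun x => u x * v' x) volume α β :=
    (((hcu.mono hsub).mul (hcv'.mono hsub))).intervalIntegrable_of_Icc hαβ
  have hFTC : ∫ x in α..β, (u' x * v x + u x * v' x) = u β * v β - u α * v α := by
    apply intervalIntegral.integral_eq_sub_of_hasDeriv_right_of_le hαβ
    · exact (hcu.mono hsub).mul (hcv.mono hsub)
    · intro x hx
      exact ((hu x (hIoo hx)).mul (hv x (hIoo hx))).hasDerivWithinAt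
    · exact hint1.add hint2
  rw [intervalIntegral.integral_add hint1 hint2] at hFTC
  linear_combination hFTC

lemma hasDerivAt_csin (c : ℂ) (x : ℝ) :
    HasDerivAt (fun y : ℝ => Complex.sin (c * y)) (c * Complex.cos (c * x)) x := by
  have h1 : HasDerivAt (fun y : ℂ => Complex.sin (c * y))
      (c * Complex.cos (c * (x:ℂ))) (x:ℂ) := by
    have h2 := (Complex.hasDerivAt_sin (c * (x:ℂ))).comp (x:ℂ)
      ((hasDerivAt_id (x:ℂ)).const_mul c)
    refine h2.congr_deriv ?_
    ring
  exact h1.comp_ofReal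

lemma hasDerivAt_ccos (c : ℂ) (x : ℝ) :
    HasDerivAt (fun y : ℝ => Complex.cos (c * y)) (-(c * Complex.sin (c * x))) x := by
  have h1 : HasDerivAt (fun y : ℂ => Complex.cos (c * y))
      (-(c * Complex.sin (c * (x:ℂ)))) (x:ℂ) := by
    have h2 := (Complex.hasDerivAt_cos (c * (x:ℂ))).comp (x:ℂ)
      ((hasDerivAt_id (x:ℂ)).const_mul c)
    refine h2.congr_deriv ?_
    ring
  exact h1.comp_ofReal

/-- The key quadratic-form bound used in both energy estimates. -/
lemma energy_bound (aξ bξ μ : ℂ) (ρ m s : ℝ) (hρ0 : 0 ≤ ρ) (hm : 0 ≤ m) (hs : 0 ≤ s)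
    (hμ : ‖μ‖ ≤ s + 2*m*Real.sqrt ρ) :
    2 * dot bξ (μ * aξ)
      ≤ (s + 2*m) * (Complex.normSq bξ + (1+ρ)*Complex.normSq aξ) := by
  have step1 : dot bξ (μ*aξ) ≤ (s + 2*m*Real.sqrt ρ)*(‖aξ‖*‖bξ‖) := by
    calc dot bξ (μ*aξ) ≤ ‖bξ‖ * ‖μ*aξ‖ := dot_le _ _
      _ = ‖μ‖*(‖aξ‖*‖bξ‖) := by rw [norm_mul]; ring
      _ ≤ (s + 2*m*Real.sqrt ρ)*(‖aξ‖*‖bξ‖) :=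
          mul_le_mul_of_nonneg_right hμ (by positivity)
  have ha : ‖aξ‖*‖aξ‖ = Complex.normSq aξ := by
    rw [Complex.normSq_eq_norm_sq]; ring
  have hb : ‖bξ‖*‖bξ‖ = Complex.normSq bξ := by
    rw [Complex.normSq_eq_norm_sq]; ring
  have hsqr : Real.sqrt ρ * Real.sqrt ρ = ρ := Real.mul_self_sqrt hρ0
  rw [← ha, ← hb, ← hsqr]
  nlinarith [step1, mul_nonneg hs (sq_nonneg (‖aξ‖ - ‖bξ‖)),
    mul_nonneg hm (sq_nonneg (Real.sqrt ρ * ‖aξ‖ - ‖bξ‖)),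
    mul_nonneg (mul_nonneg hs (Real.sqrt_nonneg ρ)) (mul_nonneg (Real.sqrt_nonneg ρ) (mul_nonneg (norm_nonneg aξ) (norm_nonneg aξ))),
    mul_nonneg hm (mul_nonneg (norm_nonneg aξ) (norm_nonneg aξ))]

end OversamplingAux
set_option maxHeartbeats 2000000 in
open OversamplingAux in
/-- Estimate for `∫₀^π F(x,z) R_{aπ}(x) cos(nx) dx` with
`F(x,z) = ξ(x,z) − cos(√z x)`, for all `z ∈ ℂ` and `n ∈ ℕ`, `n ≥ 1`. -/
theorem oversampling_F_estimate
    (V : ℝ → ℝ)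
    (hV : ∃ V' : ℝ → ℝ, IntegrableOn V' (Icc 0 π) ∧
      ∀ x ∈ Icc (0:ℝ) π, V x = V 0 + ∫ t in (0:ℝ)..x, V' t)
    (ξ ξ' : ℂ → ℝ → ℂ)
    (hξ0 : ∀ z, ξ z 0 = 1)
    (hξ'0 : ∀ z, ξ' z 0 = 0)
    (hξd : ∀ z, ∀ x ∈ Icc (0:ℝ) π, HasDerivWithinAt (ξ z) (ξ' z x) (Icc 0 π) x)
    (hξd' : ∀ z, ∀ x ∈ Icc (0:ℝ) π,
      HasDerivWithinAt (ξ' z) (((V x : ℂ) - z) * ξ z x) (Icc 0 π) x)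
    (hent : ∀ x ∈ Icc (0:ℝ) π, Differentiable ℂ (fun z => ξ z x))
    (hreal : ∀ (r x : ℝ), (ξ (r : ℂ) x).im = 0)
    (lam : ℕ → ℝ)
    (hmono : StrictMono lam)
    (hspec : ∀ r : ℝ, ξ' (r : ℂ) π = 0 ↔ ∃ n, r = lam n)
    (a : ℝ) (ha0 : 0 < a) (haπ : a < π) :
    ∃ C > 0, ∀ z : ℂ, ∀ n : ℕ, 0 < n →
      ‖∫ x in (0:ℝ)..π,
          (ξ z x - Complex.cos (z ^ (1/2 : ℂ) * x)) *
          (↑(if x ≤ a then (1:ℝ) else (π - x) / (π - a)) : ℂ) *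
          Complex.cos ((n : ℂ) * x)‖ ≤
        C * (Real.exp (π * |(z ^ (1/2 : ℂ)).im|) / (n : ℝ) ^ 2) *
          (1 + (1 + ‖z‖) / (1 + π * Real.sqrt ‖z‖)) := by
  obtain ⟨V', hV'int, hVeq⟩ := hV
  clear hent hreal hmono hspec
  have hπ : (0:ℝ) < π := Real.pi_pos
  have hπa : (0:ℝ) < π - a := sub_pos.2 haπ
  -- continuity and boundedness of V
  have hVcont : ContinuousOn V (Icc 0 π) := by
    have hprim : ContinuousOn (fun x => ∫ t in (0:ℝ)..x, V' t) (Icc 0 π) := by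
      have h := intervalIntegral.continuousOn_primitive_interval (a := 0) (b := π)
        (μ := volume) (f := V') (by rwa [uIcc_of_le hπ.le])
      rwa [uIcc_of_le hπ.le] at h
    exact (continuousOn_const.add hprim).congr hVeq
  obtain ⟨M0, hM0b⟩ := isCompact_Icc.exists_bound_of_continuousOn hVcont
  set M := max M0 0 with hMdef
  have hM0 : 0 ≤ M := le_max_right _ _
  have hMb : ∀ x ∈ Icc (0:ℝ) π, |V x| ≤ M := by
    intro x hx
    calc |V x| = ‖V x‖ := (Real.norm_eq_abs _).symm
      _ ≤ M0 := hM0b x hx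
      _ ≤ M := le_max_left _ _
  -- the constants
  set K := Real.exp ((M+1)*π/2) with hKdef
  have hK1 : 1 ≤ K := Real.one_le_exp (by positivity)
  have hK0 : 0 < K := lt_of_lt_of_le one_pos hK1
  set K₂ := M*K*Real.sqrt π*Real.exp π with hK₂def
  have hK₂0 : 0 ≤ K₂ := by positivity
  set C₁ := π*(M*K) + 2*K₂ + 2*K₂/(π-a) with hC₁def
  have hC₁0 : 0 ≤ C₁ := by
    have : 0 ≤ 2*K₂/(π-a) := div_nonneg (by positivity) hπa.le
    positivity
  set C := 1 + C₁ + (π*K₂)*(1+π) with hCdef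
  have hC0 : 0 < C := by positivity
  refine ⟨C, hC0, ?_⟩
  intro z n hn
  set w : ℂ := z ^ (1/2:ℂ) with hw
  have hw2 : w * w = z := by
    by_cases hz : z = 0
    · rw [hw, hz, Complex.zero_cpow (by norm_num : (1/2:ℂ) ≠ 0)]; ring
    · rw [hw, ← Complex.cpow_add _ _ hz]; norm_num
  set ρ := ‖z‖ with hρdef
  have hρ0 : 0 ≤ ρ := norm_nonneg z
  set m := |w.im| with hm
  have hm0 : 0 ≤ m := abs_nonneg _
  have hρw : ρ = ‖w‖*‖w‖ := by rw [hρdef, ← hw2, norm_mul]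
  have hρpq : ρ = w.re^2 + w.im^2 := by
    rw [hρw, ← pow_two, Complex.sq_norm, Complex.normSq_apply]; ring
  have hsqrtρ : Real.sqrt ρ ^ 2 = ρ := Real.sq_sqrt hρ0
  have hkey : ‖(ρ:ℂ) - z‖ = 2*m*Real.sqrt ρ := by
    have hzre : z.re = w.re*w.re - w.im*w.im := by rw [← hw2, Complex.mul_re]
    have hzim : z.im = w.re*w.im + w.im*w.re := by rw [← hw2, Complex.mul_im]
    apply eq_of_sq_eq_sq (norm_nonneg _) (by positivity)
    have h1 : ‖(ρ:ℂ) - z‖^2 = (ρ - z.re)^2 + z.im^2 := by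
      rw [Complex.sq_norm, Complex.normSq_apply]
      simp only [Complex.sub_re, Complex.sub_im, Complex.ofReal_re, Complex.ofReal_im]
      ring
    have h2 : (2*m*Real.sqrt ρ)^2 = 4*(w.im^2)*ρ := by
      rw [mul_pow, mul_pow, hsqrtρ, hm, sq_abs]; ring
    rw [h1, h2, hzre, hzim, hρpq]; ring
  -- energy estimate for ξ
  set c₁ := M + 1 + 2*m with hc₁def
  have hE₁ : ∀ x ∈ Icc (0:ℝ) π, Complex.normSq (ξ' z x) + (1+ρ)*Complex.normSq (ξ z x)
      ≤ (1+ρ) * Real.exp (c₁ * x) := by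
    have hgr := gronwall (e := fun x => Complex.normSq (ξ' z x) + (1+ρ)*Complex.normSq (ξ z x))
      (e' := fun x => 2 * dot (ξ' z x) (((V x:ℂ) - z) * ξ z x)
        + (1+ρ) * (2 * dot (ξ z x) (ξ' z x)))
      (c := c₁) (b := 0) (A := 1+ρ) ?hd1 ?hineq1 ?h01
    · intro x hx
      have h := hgr x hx
      simpa using h
    case hd1 =>
      intro x hx
      exact (hasDerivWithinAt_normSq (hξd' z x hx)).add
        ((hasDerivWithinAt_normSq (hξd z x hx)).const_mul (1+ρ))
    case hineq1 =>
      intro x hx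
      beta_reduce
      have hxI : x ∈ Icc (0:ℝ) π := Ioo_subset_Icc_self hx
      have hid : 2 * dot (ξ' z x) (((V x:ℂ) - z) * ξ z x)
          + (1+ρ) * (2 * dot (ξ z x) (ξ' z x))
          = 2 * dot (ξ' z x) ((((V x + 1 + ρ:ℝ):ℂ) - z) * ξ z x) := by
        simp only [dot, Complex.mul_re, Complex.mul_im, Complex.sub_re, Complex.sub_im,
          Complex.ofReal_re, Complex.ofReal_im]
        push_cast
        ring
      have hμ : ‖(((V x + 1 + ρ:ℝ):ℂ) - z)‖ ≤ (M+1) + 2*m*Real.sqrt ρ := by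
        have he : (((V x + 1 + ρ:ℝ):ℂ) - z) = (((V x:ℝ)):ℂ) + 1 + ((ρ:ℂ) - z) := by
          push_cast; ring
        rw [he]
        calc ‖(((V x:ℝ)):ℂ) + 1 + ((ρ:ℂ) - z)‖
            ≤ ‖(((V x:ℝ)):ℂ) + 1‖ + ‖(ρ:ℂ) - z‖ := norm_add_le _ _
          _ ≤ (‖(((V x:ℝ)):ℂ)‖ + ‖(1:ℂ)‖) + 2*m*Real.sqrt ρ := by
              rw [hkey]; gcongr; exact norm_add_le _ _
          _ ≤ (M+1) + 2*m*Real.sqrt ρ := by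
              rw [Complex.norm_real, Real.norm_eq_abs, norm_one]
              linarith [hMb x hxI]
      have hb := energy_bound (ξ z x) (ξ' z x) _ ρ m (M+1) hρ0 hm0 (by linarith) hμ
      rw [hid]
      refine le_trans hb (le_of_eq ?_)
      rw [hc₁def]; ring
    case h01 =>
      simp [hξ'0 z, hξ0 z]
  have hξb : ∀ x ∈ Icc (0:ℝ) π, ‖ξ z x‖ ≤ K * Real.exp (m*x) := by
    intro x hx
    have h1 := hE₁ x hx
    have h3 : Complex.normSq (ξ z x) ≤ Real.exp (c₁*x) := by
      have hns : 0 ≤ Complex.normSq (ξ' z x) := Complex.normSq_nonneg _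
      have hpos : (0:ℝ) < 1+ρ := by positivity
      nlinarith
    apply le_of_sq_le_sq (by positivity) ?_ (norm_nonneg _)
    have h4 : ‖ξ z x‖^2 = Complex.normSq (ξ z x) := by
      rw [Complex.sq_norm]
    rw [h4]
    calc Complex.normSq (ξ z x) ≤ Real.exp (c₁*x) := h3
      _ ≤ (K*Real.exp (m*x))^2 := by
          have h5 : (K*Real.exp (m*x))^2 = Real.exp ((M+1)*π + 2*(m*x)) := by
            rw [hKdef, mul_pow, pow_two, pow_two, ← Real.exp_add, ← Real.exp_add,
              ← Real.exp_add]
            congr 1; ring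
          rw [h5]
          apply Real.exp_le_exp.2
          rw [hc₁def]
          nlinarith [hx.1, hx.2, hm0, hM0]
  -- F and its derivatives
  set F : ℝ → ℂ := fun x => ξ z x - Complex.cos (w*x) with hFdef
  set Fp : ℝ → ℂ := fun x => ξ' z x + w*Complex.sin (w*x) with hFpdef
  set Fpp : ℝ → ℂ := fun x => ((V x:ℂ) - z)*ξ z x + z*Complex.cos (w*x) with hFppdef
  have hF : ∀ x ∈ Icc (0:ℝ) π, HasDerivWithinAt F (Fp x) (Icc 0 π) x := by
    intro x hx
    have h := (hξd z x hx).sub ((hasDerivAt_ccos w x).hasDerivWithinAt)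
    refine h.congr_deriv ?_
    rw [hFpdef]; ring
  have hFpd : ∀ x ∈ Icc (0:ℝ) π, HasDerivWithinAt Fp (Fpp x) (Icc 0 π) x := by
    intro x hx
    have h := (hξd' z x hx).add (((hasDerivAt_csin w x).const_mul w).hasDerivWithinAt)
    refine h.congr_deriv ?_
    rw [hFppdef, ← hw2]; ring
  have hFi : ∀ x ∈ Ioo (0:ℝ) π, HasDerivAt F (Fp x) x := fun x hx =>
    (hF x (Ioo_subset_Icc_self hx)).hasDerivAt (Icc_mem_nhds hx.1 hx.2)
  have hFpi : ∀ x ∈ Ioo (0:ℝ) π, HasDerivAt Fp (Fpp x) x := fun x hx =>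
    (hFpd x (Ioo_subset_Icc_self hx)).hasDerivAt (Icc_mem_nhds hx.1 hx.2)
  have hF0 : F 0 = 0 := by rw [hFdef]; simp [hξ0 z]
  have hFp0 : Fp 0 = 0 := by rw [hFpdef]; simp [hξ'0 z]
  -- energy estimate for F
  set c₂ := 2 + 2*m with hc₂def
  set b₂ := (M*K)^2 with hb₂def
  have hb₂0 : 0 ≤ b₂ := by rw [hb₂def]; positivity
  have hE₂ : ∀ x ∈ Icc (0:ℝ) π, Complex.normSq (Fp x) + (1+ρ)*Complex.normSq (F x)
      ≤ b₂ * x * Real.exp (c₂ * x) := by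
    have hgr := gronwall (e := fun x => Complex.normSq (Fp x) + (1+ρ)*Complex.normSq (F x))
      (e' := fun x => 2 * dot (Fp x) (Fpp x) + (1+ρ) * (2 * dot (F x) (Fp x)))
      (c := c₂) (b := b₂) (A := 0) ?hd2 ?hineq2 ?h02
    · intro x hx
      have h := hgr x hx
      simpa [mul_assoc] using h
    case hd2 =>
      intro x hx
      exact (hasDerivWithinAt_normSq (hFpd x hx)).add
        ((hasDerivWithinAt_normSq (hF x hx)).const_mul (1+ρ))
    case hineq2 =>
      intro x hx
      beta_reduce
      have hxI : x ∈ Icc (0:ℝ) π := Ioo_subset_Icc_self hx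
      have hFppeq : Fpp x = (V x:ℂ)*ξ z x - z*F x := by
        rw [hFppdef, hFdef]; ring
      have hid : 2 * dot (Fp x) (Fpp x) + (1+ρ) * (2 * dot (F x) (Fp x))
          = 2 * dot (Fp x) ((V x:ℂ)*ξ z x) + 2 * dot (Fp x) ((((1+ρ:ℝ):ℂ) - z) * F x) := by
        rw [hFppeq]
        simp only [dot, Complex.mul_re, Complex.mul_im, Complex.sub_re, Complex.sub_im,
          Complex.ofReal_re, Complex.ofReal_im]
        ring
      have hμ2 : ‖(((1+ρ:ℝ):ℂ) - z)‖ ≤ 1 + 2*m*Real.sqrt ρ := by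
        have he : (((1+ρ:ℝ):ℂ) - z) = 1 + ((ρ:ℂ) - z) := by push_cast; ring
        rw [he]
        calc ‖(1:ℂ) + ((ρ:ℂ) - z)‖ ≤ ‖(1:ℂ)‖ + ‖(ρ:ℂ) - z‖ := norm_add_le _ _
          _ = 1 + 2*m*Real.sqrt ρ := by rw [norm_one, hkey]
      have ht2 := energy_bound (F x) (Fp x) _ ρ m 1 hρ0 hm0 one_pos.le hμ2
      have ht1 : 2 * dot (Fp x) ((V x:ℂ)*ξ z x)
          ≤ Complex.normSq (Fp x) + b₂ * Real.exp (2*(m*x)) := by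
        have hd1 : dot (Fp x) ((V x:ℂ)*ξ z x) ≤ ‖Fp x‖ * (M * (K*Real.exp (m*x))) := by
          calc dot (Fp x) ((V x:ℂ)*ξ z x) ≤ ‖Fp x‖ * ‖(V x:ℂ)*ξ z x‖ := dot_le _ _
            _ = ‖Fp x‖ * (|V x| * ‖ξ z x‖) := by
                rw [norm_mul, Complex.norm_real, Real.norm_eq_abs]
            _ ≤ ‖Fp x‖ * (M * (K*Real.exp (m*x))) := by
                have h1 := hMb x hxI
                have h2 := hξb x hxI
                have h3 : |V x| * ‖ξ z x‖ ≤ M * (K*Real.exp (m*x)) :=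
                  mul_le_mul h1 h2 (norm_nonneg _) hM0
                exact mul_le_mul_of_nonneg_left h3 (norm_nonneg _)
        have hnsq : ‖Fp x‖*‖Fp x‖ = Complex.normSq (Fp x) := by
          rw [Complex.normSq_eq_norm_sq]; ring
        have hexp2 : Real.exp (2*(m*x)) = Real.exp (m*x) * Real.exp (m*x) := by
          rw [← Real.exp_add]; congr 1; ring
        rw [hb₂def, hexp2]
        nlinarith [hd1, sq_nonneg (‖Fp x‖ - M*K*Real.exp (m*x)), Real.exp_pos (m*x)]
      have hexpm : Real.exp (2*(m*x)) ≤ Real.exp (c₂*x) := by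
        apply Real.exp_le_exp.2
        rw [hc₂def]
        nlinarith [hx.1.le, hm0]
      rw [hid]
      calc 2 * dot (Fp x) ((V x:ℂ)*ξ z x) + 2 * dot (Fp x) ((((1+ρ:ℝ):ℂ) - z) * F x)
          ≤ (Complex.normSq (Fp x) + b₂*Real.exp (2*(m*x)))
            + (1+2*m)*(Complex.normSq (Fp x) + (1+ρ)*Complex.normSq (F x)) :=
            add_le_add ht1 ht2
        _ ≤ c₂ * (Complex.normSq (Fp x) + (1+ρ)*Complex.normSq (F x))
            + b₂*Real.exp (c₂*x) := by
            rw [hc₂def]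
            nlinarith [mul_le_mul_of_nonneg_left hexpm hb₂0,
              Complex.normSq_nonneg (F x), Complex.normSq_nonneg (Fp x), hρ0, hm0,
              mul_nonneg hρ0 (Complex.normSq_nonneg (F x))]
    case h02 =>
      simp [hF0, hFp0]
  -- pointwise bounds on F, Fp
  have hEb : ∀ x ∈ Icc (0:ℝ) π, Complex.normSq (Fp x) + (1+ρ)*Complex.normSq (F x)
      ≤ (K₂ * Real.exp (m*x))^2 := by
    intro x hx
    have h1 := hE₂ x hx
    have e3 : Real.sqrt π ^ 2 = π := Real.sq_sqrt hπ.le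
    have h2 : (K₂*Real.exp (m*x))^2 = b₂ * π * Real.exp (2*π + 2*(m*x)) := by
      rw [hK₂def, hb₂def]
      have e1 : Real.exp (2*π + 2*(m*x))
          = (Real.exp π * Real.exp π) * (Real.exp (m*x) * Real.exp (m*x)) := by
        rw [← Real.exp_add, ← Real.exp_add, ← Real.exp_add]; congr 1; ring
      rw [e1]
      linear_combination (M*K*Real.exp π*Real.exp (m*x))^2 * e3
    calc Complex.normSq (Fp x) + (1+ρ)*Complex.normSq (F x)
        ≤ b₂*x*Real.exp (c₂*x) := h1
      _ ≤ b₂*π*Real.exp (2*π + 2*(m*x)) := by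
          have hee : Real.exp (c₂*x) ≤ Real.exp (2*π + 2*(m*x)) := by
            apply Real.exp_le_exp.2; rw [hc₂def]; nlinarith [hx.1, hx.2, hm0]
          exact mul_le_mul (mul_le_mul_of_nonneg_left hx.2 hb₂0) hee
            (Real.exp_pos _).le (by positivity)
      _ = (K₂*Real.exp (m*x))^2 := h2.symm
  have hFpb : ∀ x ∈ Icc (0:ℝ) π, ‖Fp x‖ ≤ K₂*Real.exp (m*x) := by
    intro x hx
    apply le_of_sq_le_sq (by positivity) ?_ (norm_nonneg _)
    have h4 : ‖Fp x‖^2 = Complex.normSq (Fp x) := by rw [Complex.sq_norm]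
    rw [h4]
    have h1 := hEb x hx
    nlinarith [Complex.normSq_nonneg (F x), hρ0,
      mul_nonneg hρ0 (Complex.normSq_nonneg (F x))]
  have hFb : ∀ x ∈ Icc (0:ℝ) π, ‖F x‖ ≤ K₂*Real.exp (m*x) := by
    intro x hx
    apply le_of_sq_le_sq (by positivity) ?_ (norm_nonneg _)
    have h4 : ‖F x‖^2 = Complex.normSq (F x) := by rw [Complex.sq_norm]
    rw [h4]
    have h1 := hEb x hx
    nlinarith [Complex.normSq_nonneg (Fp x), hρ0,
      mul_nonneg hρ0 (Complex.normSq_nonneg (F x))]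
  have hzFb : ∀ x ∈ Icc (0:ℝ) π, ρ*‖F x‖ ≤ K₂*Real.sqrt ρ*Real.exp (m*x) := by
    intro x hx
    apply le_of_sq_le_sq (by positivity) ?_ (by positivity)
    have h4 : ‖F x‖^2 = Complex.normSq (F x) := by rw [Complex.sq_norm]
    have h5 : (K₂*Real.sqrt ρ*Real.exp (m*x))^2 = ρ*(K₂*Real.exp (m*x))^2 := by
      rw [mul_pow, mul_pow, hsqrtρ]; ring
    rw [h5, mul_pow, h4]
    have h1 := hEb x hx
    have h6 : (1+ρ)*Complex.normSq (F x) ≤ (K₂*Real.exp (m*x))^2 := by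
      nlinarith [Complex.normSq_nonneg (Fp x)]
    nlinarith [mul_le_mul_of_nonneg_left h6 hρ0, Complex.normSq_nonneg (F x),
      mul_nonneg hρ0 (Complex.normSq_nonneg (F x))]
  -- trig functions and weight
  set N : ℂ := (n:ℂ) with hNdef
  set ccos : ℝ → ℂ := fun x => Complex.cos (N*x) with hccosdef
  set csin : ℝ → ℂ := fun x => Complex.sin (N*x) with hcsindef
  have hcsind : ∀ x ∈ Ioo (0:ℝ) π, HasDerivAt csin (N * ccos x) x := fun x _ =>
    hasDerivAt_csin N x
  have hccosd : ∀ x ∈ Ioo (0:ℝ) π, HasDerivAt ccos (-(N * csin x)) x := fun x _ =>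
    hasDerivAt_ccos N x
  have hccos_cont : Continuous ccos :=
    Complex.continuous_cos.comp (continuous_const.mul Complex.continuous_ofReal)
  have hcsin_cont : Continuous csin :=
    Complex.continuous_sin.comp (continuous_const.mul Complex.continuous_ofReal)
  have hcF : ContinuousOn F (Icc 0 π) := fun x hx => (hF x hx).continuousWithinAt
  have hcFp : ContinuousOn Fp (Icc 0 π) := fun x hx => (hFpd x hx).continuousWithinAt
  have hcξ : ContinuousOn (ξ z) (Icc 0 π) := fun x hx => (hξd z x hx).continuousWithinAt
  have hcFpp : ContinuousOn Fpp (Icc 0 π) := by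
    rw [hFppdef]
    apply ContinuousOn.add
    · exact ((Complex.continuous_ofReal.comp_continuousOn hVcont).sub continuousOn_const).mul hcξ
    · exact (continuous_const.mul
        (Complex.continuous_cos.comp (continuous_const.mul Complex.continuous_ofReal))).continuousOn
  set wc : ℝ → ℂ := fun x => (((π - x)/(π - a) : ℝ) : ℂ) with hwcdef
  set dw : ℂ := ((-(π - a)⁻¹ : ℝ) : ℂ) with hdwdef
  have hwcd : ∀ x : ℝ, HasDerivAt wc dw x := by
    intro x
    have h1 : HasDerivAt (fun y : ℝ => π - y) (-1) x := by
      simpa using (hasDerivAt_id x).const_sub π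
    have h2 := h1.div_const (π - a)
    have hr : HasDerivAt (fun y : ℝ => (π - y)/(π - a)) (-(π - a)⁻¹) x := by
      refine h2.congr_deriv ?_
      ring
    exact hr.ofReal_comp
  have hwc_cont : Continuous wc := by
    rw [hwcdef]
    exact Complex.continuous_ofReal.comp ((continuous_const.sub continuous_id).div_const _)
  have hwca : wc a = 1 := by
    show (((π - a)/(π - a) : ℝ) : ℂ) = 1
    rw [div_self hπa.ne']
    norm_num
  have hwcπ : wc π = 0 := by
    show (((π - π)/(π - a) : ℝ) : ℂ) = 0
    norm_num
  set G : ℝ → ℂ := fun x => F x * wc x with hGdef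
  set Gp : ℝ → ℂ := fun x => Fp x * wc x + F x * dw with hGpdef
  have hGi : ∀ x ∈ Ioo (0:ℝ) π, HasDerivAt G (Gp x) x := fun x hx =>
    (hFi x hx).mul (hwcd x)
  have hGpi : ∀ x ∈ Ioo (0:ℝ) π,
      HasDerivAt Gp ((Fpp x * wc x + Fp x * dw) + Fp x * dw) x := fun x hx =>
    ((hFpi x hx).mul (hwcd x)).add ((hFi x hx).mul_const dw)
  have hcG : ContinuousOn G (Icc 0 π) := hcF.mul hwc_cont.continuousOn
  have hcGp : ContinuousOn Gp (Icc 0 π) :=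
    (hcFp.mul hwc_cont.continuousOn).add (hcF.mul continuousOn_const)
  have hcGpp : ContinuousOn (fun x => (Fpp x * wc x + Fp x * dw) + Fp x * dw) (Icc 0 π) :=
    ((hcFpp.mul hwc_cont.continuousOn).add (hcFp.mul continuousOn_const)).add
      (hcFp.mul continuousOn_const)
  have hcsin0 : csin 0 = 0 := by
    show Complex.sin (N * ((0:ℝ):ℂ)) = 0
    norm_num
  have hcsinπ : csin π = 0 := by
    show Complex.sin (N * ((π:ℝ):ℂ)) = 0
    have h : (N * ((π:ℝ):ℂ)) = (((n:ℝ) * π : ℝ) : ℂ) := by rw [hNdef]; push_cast; ring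
    rw [h, ← Complex.ofReal_sin]
    norm_cast
    exact Real.sin_nat_mul_pi n
  -- the four integrations by parts
  have raw1 := ibp (u := F) (v := csin) (u' := Fp) (v' := fun x => N * ccos x)
    ha0.le le_rfl haπ.le hFi hcsind hcF hcsin_cont.continuousOn hcFp
    (continuous_const.mul hccos_cont).continuousOn
  have A1 : N * ∫ x in (0:ℝ)..a, F x * ccos x
      = F a * csin a - ∫ x in (0:ℝ)..a, Fp x * csin x := by
    have h := raw1
    beta_reduce at h
    rw [hF0, hcsin0] at h
    rw [show (∫ x in (0:ℝ)..a, F x * (N * ccos x))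
        = N * ∫ x in (0:ℝ)..a, F x * ccos x from by
      rw [← intervalIntegral.integral_const_mul]
      apply intervalIntegral.integral_congr
      intro x _; ring] at h
    simpa using h
  have raw2 := ibp (u := Fp) (v := ccos) (u' := Fpp) (v' := fun x => -(N * csin x))
    ha0.le le_rfl haπ.le hFpi hccosd hcFp hccos_cont.continuousOn hcFpp
    (continuous_const.mul hcsin_cont).neg.continuousOn
  have A2 : -(N * ∫ x in (0:ℝ)..a, Fp x * csin x)
      = Fp a * ccos a - ∫ x in (0:ℝ)..a, Fpp x * ccos x := by
    have h := raw2
    beta_reduce at h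
    rw [hFp0] at h
    rw [show (∫ x in (0:ℝ)..a, Fp x * -(N * csin x))
        = -(N * ∫ x in (0:ℝ)..a, Fp x * csin x) from by
      rw [← intervalIntegral.integral_const_mul, ← intervalIntegral.integral_neg]
      apply intervalIntegral.integral_congr
      intro x _; ring] at h
    simpa using h
  have raw3 := ibp (u := G) (v := csin) (u' := Gp) (v' := fun x => N * ccos x)
    haπ.le ha0.le le_rfl hGi hcsind hcG hcsin_cont.continuousOn hcGp
    (continuous_const.mul hccos_cont).continuousOn
  have hGa : G a = F a := by
    show F a * wc a = F a
    rw [hwca, mul_one]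
  have A3 : N * ∫ x in a..π, G x * ccos x
      = -(F a * csin a) - ∫ x in a..π, Gp x * csin x := by
    have h := raw3
    beta_reduce at h
    rw [hcsinπ, hGa] at h
    rw [show (∫ x in a..π, G x * (N * ccos x))
        = N * ∫ x in a..π, G x * ccos x from by
      rw [← intervalIntegral.integral_const_mul]
      apply intervalIntegral.integral_congr
      intro x _; ring] at h
    rw [mul_zero, zero_sub] at h
    linear_combination h
  have raw4 := ibp (u := Gp) (v := ccos)
    (u' := fun x => (Fpp x * wc x + Fp x * dw) + Fp x * dw)
    (v' := fun x => -(N * csin x)) haπ.le ha0.le le_rfl hGpi hccosd hcGp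
    hccos_cont.continuousOn hcGpp (continuous_const.mul hcsin_cont).neg.continuousOn
  have hGpa : Gp a = Fp a + F a * dw := by
    show Fp a * wc a + F a * dw = _
    rw [hwca, mul_one]
  have hGpπ : Gp π = F π * dw := by
    show Fp π * wc π + F π * dw = _
    rw [hwcπ, mul_zero, zero_add]
  have hsub2 : Icc a π ⊆ Icc (0:ℝ) π := Icc_subset_Icc ha0.le le_rfl
  have hIntaπ : ∀ {f : ℝ → ℂ}, ContinuousOn f (Icc 0 π) → IntervalIntegrable f volume a π :=
    fun hf => (hf.mono hsub2).intervalIntegrable_of_Icc haπ.le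
  have hsplit4 : ∫ x in a..π, ((Fpp x * wc x + Fp x * dw) + Fp x * dw) * ccos x
      = (∫ x in a..π, (Fpp x * wc x) * ccos x)
        + 2*dw*(∫ x in a..π, Fp x * ccos x) := by
    rw [intervalIntegral.integral_congr
      (g := fun x => (Fpp x * wc x) * ccos x + (2*dw)*(Fp x * ccos x))
      (fun x _ => by ring)]
    rw [intervalIntegral.integral_add (f := fun x => (Fpp x * wc x) * ccos x)
      (g := fun x => (2*dw)*(Fp x * ccos x))
      (hIntaπ ((hcFpp.mul hwc_cont.continuousOn).mul hccos_cont.continuousOn))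
      ((hIntaπ (hcFp.mul hccos_cont.continuousOn)).const_mul (2*dw))]
    rw [intervalIntegral.integral_const_mul]
  have A4 : -(N * ∫ x in a..π, Gp x * csin x)
      = F π * dw * ccos π - (Fp a + F a * dw) * ccos a
        - ((∫ x in a..π, (Fpp x * wc x) * ccos x)
          + 2*dw*(∫ x in a..π, Fp x * ccos x)) := by
    have h := raw4
    beta_reduce at h
    rw [hGpπ, hGpa, hsplit4] at h
    rw [show (∫ x in a..π, Gp x * -(N * csin x))
        = -(N * ∫ x in a..π, Gp x * csin x) from by
      rw [← intervalIntegral.integral_const_mul, ← intervalIntegral.integral_neg]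
      apply intervalIntegral.integral_congr
      intro x _; ring] at h
    exact h
  -- split the target integral
  have hRcont : Continuous (fun x : ℝ => (if x ≤ a then (1:ℝ) else (π - x)/(π - a))) := by
    apply Continuous.if_le continuous_const
      ((continuous_const.sub continuous_id).div_const _) continuous_id continuous_const
    intro x hx
    rw [show x = a from hx]
    show (1:ℝ) = (π - a)/(π - a)
    rw [div_self hπa.ne']
  have hintg_cont : ContinuousOn (fun x : ℝ => (ξ z x - Complex.cos (w*x)) *
      (((if x ≤ a then (1:ℝ) else (π - x)/(π - a)) : ℝ) : ℂ) *
      Complex.cos ((n:ℂ)*x)) (Icc 0 π) :=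
    (hcF.mul (Complex.continuous_ofReal.comp hRcont).continuousOn).mul
      hccos_cont.continuousOn
  have hsplitI : (∫ x in (0:ℝ)..π, (ξ z x - Complex.cos (w*x)) *
        (((if x ≤ a then (1:ℝ) else (π - x)/(π - a)) : ℝ) : ℂ) * Complex.cos ((n:ℂ)*x))
      = (∫ x in (0:ℝ)..a, F x * ccos x) + (∫ x in a..π, G x * ccos x) := by
    rw [← intervalIntegral.integral_add_adjacent_intervals (b := a)
      ((hintg_cont.mono (Icc_subset_Icc le_rfl haπ.le)).intervalIntegrable_of_Icc ha0.le)
      ((hintg_cont.mono hsub2).intervalIntegrable_of_Icc haπ.le)]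
    congr 1
    · apply intervalIntegral.integral_congr
      intro x hx
      beta_reduce
      rw [uIcc_of_le ha0.le] at hx
      rw [if_pos hx.2]
      push_cast
      ring
    · apply intervalIntegral.integral_congr
      intro x hx
      beta_reduce
      rw [uIcc_of_le haπ.le] at hx
      have hif : ((if x ≤ a then (1:ℝ) else (π - x)/(π - a)) : ℝ) = (π - x)/(π - a) := by
        split_ifs with h
        · rw [le_antisymm h hx.1, div_self hπa.ne']
        · rfl
      rw [hif]
  have hmain : N^2 * ((∫ x in (0:ℝ)..a, F x * ccos x) + ∫ x in a..π, G x * ccos x)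
      = -(∫ x in (0:ℝ)..a, Fpp x * ccos x) - (∫ x in a..π, (Fpp x * wc x) * ccos x)
        - 2*dw*(∫ x in a..π, Fp x * ccos x) + F π * dw * ccos π - F a * dw * ccos a := by
    linear_combination N * A1 + A2 + N * A3 + A4
  -- norm bounds
  have hNn : ‖N‖ = (n:ℝ) := by rw [hNdef]; simp
  have hccos1 : ∀ x : ℝ, ‖ccos x‖ ≤ 1 := by
    intro x
    show ‖Complex.cos (N * ((x:ℝ):ℂ))‖ ≤ 1
    have h : (N * ((x:ℝ):ℂ)) = (((n:ℝ) * x : ℝ) : ℂ) := by rw [hNdef]; push_cast; ring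
    rw [h, ← Complex.ofReal_cos, Complex.norm_real, Real.norm_eq_abs]
    exact Real.abs_cos_le_one _
  set CF := (M*K + K₂*Real.sqrt ρ)*Real.exp (m*π) with hCFdef
  have hCF0 : 0 ≤ CF := by positivity
  have hexpmm : ∀ x ∈ Icc (0:ℝ) π, Real.exp (m*x) ≤ Real.exp (m*π) := fun x hx =>
    Real.exp_le_exp.2 (mul_le_mul_of_nonneg_left hx.2 hm0)
  have hFppb : ∀ x ∈ Icc (0:ℝ) π, ‖Fpp x‖ ≤ CF := by
    intro x hx
    have heq : Fpp x = (V x:ℂ)*ξ z x - z*F x := by rw [hFppdef, hFdef]; ring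
    rw [heq, hCFdef]
    have h3 : 0 ≤ M*K + K₂*Real.sqrt ρ := by positivity
    calc ‖(V x:ℂ)*ξ z x - z*F x‖ ≤ ‖(V x:ℂ)*ξ z x‖ + ‖z*F x‖ := norm_sub_le _ _
      _ = |V x| * ‖ξ z x‖ + ρ*‖F x‖ := by
          rw [norm_mul, norm_mul, Complex.norm_real, Real.norm_eq_abs, ← hρdef]
      _ ≤ M*(K*Real.exp (m*x)) + K₂*Real.sqrt ρ*Real.exp (m*x) := by
          have h1 := mul_le_mul (hMb x hx) (hξb x hx) (norm_nonneg _) hM0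
          have h2 := hzFb x hx
          linarith only [h1, h2]
      _ = (M*K + K₂*Real.sqrt ρ)*Real.exp (m*x) := by ring
      _ ≤ (M*K + K₂*Real.sqrt ρ)*Real.exp (m*π) :=
          mul_le_mul_of_nonneg_left (hexpmm x hx) h3
  have hn1 : ‖∫ x in (0:ℝ)..a, Fpp x * ccos x‖ ≤ CF * a := by
    have h := intervalIntegral.norm_integral_le_of_norm_le_const (C := CF)
      (f := fun x => Fpp x * ccos x) (a := 0) (b := a) ?_
    · rw [sub_zero, abs_of_nonneg ha0.le] at h
      exact h
    · intro x hx
      rw [Set.uIoc_of_le ha0.le] at hx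
      have hxI : x ∈ Icc (0:ℝ) π := ⟨hx.1.le, hx.2.trans haπ.le⟩
      calc ‖Fpp x * ccos x‖ = ‖Fpp x‖ * ‖ccos x‖ := norm_mul _ _
        _ ≤ CF * 1 := mul_le_mul (hFppb x hxI) (hccos1 x) (norm_nonneg _) hCF0
        _ = CF := mul_one _
  have hwc1 : ∀ x ∈ Set.Ioc a π, ‖wc x‖ ≤ 1 := by
    intro x hx
    show ‖(((π - x)/(π - a) : ℝ):ℂ)‖ ≤ 1
    rw [Complex.norm_real, Real.norm_eq_abs,
      abs_of_nonneg (div_nonneg (by linarith only [hx.2]) hπa.le), div_le_one hπa]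
    linarith only [hx.1]
  have hn2 : ‖∫ x in a..π, (Fpp x * wc x) * ccos x‖ ≤ CF * (π - a) := by
    have h := intervalIntegral.norm_integral_le_of_norm_le_const (C := CF)
      (f := fun x => (Fpp x * wc x) * ccos x) (a := a) (b := π) ?_
    · rw [abs_of_nonneg (by linarith only [haπ] : (0:ℝ) ≤ π - a)] at h
      exact h
    · intro x hx
      rw [Set.uIoc_of_le haπ.le] at hx
      have hxI : x ∈ Icc (0:ℝ) π := ⟨ha0.le.trans hx.1.le, hx.2⟩
      calc ‖(Fpp x * wc x) * ccos x‖ = ‖Fpp x‖ * ‖wc x‖ * ‖ccos x‖ := by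
            rw [norm_mul, norm_mul]
        _ ≤ CF * 1 * 1 := by
            apply mul_le_mul _ (hccos1 x) (norm_nonneg _) (by linarith only [hCF0])
            exact mul_le_mul (hFppb x hxI) (hwc1 x hx) (norm_nonneg _) hCF0
        _ = CF := by ring
  have hn3 : ‖∫ x in a..π, Fp x * ccos x‖ ≤ (K₂*Real.exp (m*π)) * (π - a) := by
    have h := intervalIntegral.norm_integral_le_of_norm_le_const (C := K₂*Real.exp (m*π))
      (f := fun x => Fp x * ccos x) (a := a) (b := π) ?_
    · rw [abs_of_nonneg (by linarith only [haπ] : (0:ℝ) ≤ π - a)] at h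
      exact h
    · intro x hx
      rw [Set.uIoc_of_le haπ.le] at hx
      have hxI : x ∈ Icc (0:ℝ) π := ⟨ha0.le.trans hx.1.le, hx.2⟩
      calc ‖Fp x * ccos x‖ = ‖Fp x‖ * ‖ccos x‖ := norm_mul _ _
        _ ≤ (K₂*Real.exp (m*x)) * 1 := mul_le_mul (hFpb x hxI) (hccos1 x)
            (norm_nonneg _) (by positivity)
        _ = K₂*Real.exp (m*x) := mul_one _
        _ ≤ K₂*Real.exp (m*π) := mul_le_mul_of_nonneg_left (hexpmm x hxI) hK₂0
  have hFan : ‖F a‖ ≤ K₂*Real.exp (m*π) := by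
    have h1 := hFb a ⟨ha0.le, haπ.le⟩
    have h2 := hexpmm a ⟨ha0.le, haπ.le⟩
    calc ‖F a‖ ≤ K₂*Real.exp (m*a) := h1
      _ ≤ K₂*Real.exp (m*π) := mul_le_mul_of_nonneg_left h2 hK₂0
  have hFπn : ‖F π‖ ≤ K₂*Real.exp (m*π) := by
    have h1 := hFb π ⟨hπ.le, le_rfl⟩
    exact h1
  have hdwn : ‖dw‖ = (π - a)⁻¹ := by
    rw [hdwdef, Complex.norm_real, Real.norm_eq_abs, abs_neg,
      abs_of_nonneg (inv_nonneg.2 hπa.le)]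
  -- assemble
  have hJn : (n:ℝ)^2 * ‖(∫ x in (0:ℝ)..a, F x * ccos x) + ∫ x in a..π, G x * ccos x‖
      ≤ Real.exp (m*π) * (C₁ + (π*K₂)*Real.sqrt ρ) := by
    have h0 : (n:ℝ)^2 * ‖(∫ x in (0:ℝ)..a, F x * ccos x) + ∫ x in a..π, G x * ccos x‖
        = ‖N^2 * ((∫ x in (0:ℝ)..a, F x * ccos x) + ∫ x in a..π, G x * ccos x)‖ := by
      rw [norm_mul, norm_pow, hNn]
    rw [h0, hmain]
    have u3 : ‖2*dw*(∫ x in a..π, Fp x * ccos x)‖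
        ≤ 2*(π - a)⁻¹*((K₂*Real.exp (m*π))*(π - a)) := by
      rw [norm_mul, norm_mul, hdwn]
      have h2 : ‖(2:ℂ)‖ = 2 := by norm_num
      rw [h2]
      exact mul_le_mul_of_nonneg_left hn3
        (mul_nonneg (by norm_num) (inv_nonneg.2 hπa.le))
    have u4 : ‖F π * dw * ccos π‖ ≤ (K₂*Real.exp (m*π))*(π - a)⁻¹ := by
      rw [norm_mul, norm_mul, hdwn]
      calc ‖F π‖*(π - a)⁻¹*‖ccos π‖ ≤ ‖F π‖*(π - a)⁻¹*1 :=
            mul_le_mul_of_nonneg_left (hccos1 π)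
              (mul_nonneg (norm_nonneg _) (inv_nonneg.2 hπa.le))
        _ = ‖F π‖*(π - a)⁻¹ := mul_one _
        _ ≤ (K₂*Real.exp (m*π))*(π - a)⁻¹ :=
            mul_le_mul_of_nonneg_right hFπn (inv_nonneg.2 hπa.le)
    have u5 : ‖F a * dw * ccos a‖ ≤ (K₂*Real.exp (m*π))*(π - a)⁻¹ := by
      rw [norm_mul, norm_mul, hdwn]
      calc ‖F a‖*(π - a)⁻¹*‖ccos a‖ ≤ ‖F a‖*(π - a)⁻¹*1 :=
            mul_le_mul_of_nonneg_left (hccos1 a)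
              (mul_nonneg (norm_nonneg _) (inv_nonneg.2 hπa.le))
        _ = ‖F a‖*(π - a)⁻¹ := mul_one _
        _ ≤ (K₂*Real.exp (m*π))*(π - a)⁻¹ :=
            mul_le_mul_of_nonneg_right hFan (inv_nonneg.2 hπa.le)
    calc ‖-(∫ x in (0:ℝ)..a, Fpp x * ccos x) - (∫ x in a..π, (Fpp x * wc x) * ccos x)
          - 2*dw*(∫ x in a..π, Fp x * ccos x) + F π * dw * ccos π - F a * dw * ccos a‖
        ≤ ‖-(∫ x in (0:ℝ)..a, Fpp x * ccos x) - (∫ x in a..π, (Fpp x * wc x) * ccos x)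
          - 2*dw*(∫ x in a..π, Fp x * ccos x) + F π * dw * ccos π‖
          + ‖F a * dw * ccos a‖ := norm_sub_le _ _
      _ ≤ (‖-(∫ x in (0:ℝ)..a, Fpp x * ccos x) - (∫ x in a..π, (Fpp x * wc x) * ccos x)
          - 2*dw*(∫ x in a..π, Fp x * ccos x)‖ + ‖F π * dw * ccos π‖)
          + ‖F a * dw * ccos a‖ := by
          gcongr
          exact norm_add_le _ _
      _ ≤ ((‖-(∫ x in (0:ℝ)..a, Fpp x * ccos x) - (∫ x in a..π, (Fpp x * wc x) * ccos x)‖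
          + ‖2*dw*(∫ x in a..π, Fp x * ccos x)‖) + ‖F π * dw * ccos π‖)
          + ‖F a * dw * ccos a‖ := by
          gcongr
          exact norm_sub_le _ _
      _ ≤ (((‖∫ x in (0:ℝ)..a, Fpp x * ccos x‖ + ‖∫ x in a..π, (Fpp x * wc x) * ccos x‖)
          + ‖2*dw*(∫ x in a..π, Fp x * ccos x)‖) + ‖F π * dw * ccos π‖)
          + ‖F a * dw * ccos a‖ := by
          gcongr
          calc ‖-(∫ x in (0:ℝ)..a, Fpp x * ccos x) - (∫ x in a..π, (Fpp x * wc x) * ccos x)‖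
              ≤ ‖-(∫ x in (0:ℝ)..a, Fpp x * ccos x)‖
                + ‖∫ x in a..π, (Fpp x * wc x) * ccos x‖ := norm_sub_le _ _
            _ = ‖∫ x in (0:ℝ)..a, Fpp x * ccos x‖
                + ‖∫ x in a..π, (Fpp x * wc x) * ccos x‖ := by rw [norm_neg]
      _ ≤ (((CF*a + CF*(π - a)) + 2*(π - a)⁻¹*((K₂*Real.exp (m*π))*(π - a)))
          + (K₂*Real.exp (m*π))*(π - a)⁻¹) + (K₂*Real.exp (m*π))*(π - a)⁻¹ :=
          add_le_add (add_le_add (add_le_add (add_le_add hn1 hn2) u3) u4) u5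
      _ = Real.exp (m*π) * (C₁ + (π*K₂)*Real.sqrt ρ) := by
          rw [hC₁def, hCFdef]
          field_simp
          ring
  -- conclusion
  rw [hsplitI]
  have hncast : (0:ℝ) < (n:ℝ) := by exact_mod_cast hn
  have hn0 : (0:ℝ) < (n:ℝ)^2 := by positivity
  have hden : (0:ℝ) < 1 + π*Real.sqrt ρ := by positivity
  have hD0 : 0 ≤ (1+ρ)/(1+π*Real.sqrt ρ) := div_nonneg (by linarith only [hρ0]) hden.le
  have hss : Real.sqrt ρ * Real.sqrt ρ = ρ := Real.mul_self_sqrt hρ0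
  have hsqrtle : Real.sqrt ρ ≤ (1+π)*((1+ρ)/(1+π*Real.sqrt ρ)) := by
    rw [mul_div_assoc']
    rw [le_div_iff₀ hden]
    have hs1 : Real.sqrt ρ ≤ 1 + ρ := by
      have h0 : 0 ≤ (Real.sqrt ρ - 1)^2 := sq_nonneg _
      have h1 : (Real.sqrt ρ - 1)^2 = ρ - 2*Real.sqrt ρ + 1 := by
        have he : (Real.sqrt ρ - 1)^2 = Real.sqrt ρ^2 - 2*Real.sqrt ρ + 1 := by ring
        rw [he, hsqrtρ]
      linarith only [h0, h1, Real.sqrt_nonneg ρ]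
    have hexp : Real.sqrt ρ * (1 + π*Real.sqrt ρ) = Real.sqrt ρ + π*ρ := by
      have : Real.sqrt ρ * (1 + π*Real.sqrt ρ)
          = Real.sqrt ρ + π*(Real.sqrt ρ*Real.sqrt ρ) := by ring
      rw [this, hss]
    rw [hexp]
    have hπρ : 0 ≤ π*ρ := mul_nonneg hπ.le hρ0
    have hrhs : (1+π)*(1+ρ) = 1 + ρ + π + π*ρ := by ring
    rw [hrhs]
    linarith only [hs1, hπ.le]
  have hfinal : C₁ + (π*K₂)*Real.sqrt ρ ≤ C * (1 + (1+ρ)/(1+π*Real.sqrt ρ)) := by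
    set D := (1+ρ)/(1+π*Real.sqrt ρ) with hDdef
    rw [hCdef]
    have hQ1 : (1:ℝ) ≤ 1 + D := by linarith only [hD0]
    have h1 : C₁ ≤ C₁ * (1 + D) := le_mul_of_one_le_right hC₁0 hQ1
    have h2 : (π*K₂)*Real.sqrt ρ ≤ (π*K₂)*((1+π)*D) :=
      mul_le_mul_of_nonneg_left hsqrtle (by positivity)
    have h3 : (π*K₂)*((1+π)*D) ≤ (π*K₂*(1+π))*(1+D) := by
      have he : (π*K₂)*((1+π)*D) = (π*K₂*(1+π))*D := by ring
      rw [he]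
      exact mul_le_mul_of_nonneg_left (by linarith only [] : D ≤ 1 + D) (by positivity)
    have hexpand : (1 + C₁ + π*K₂*(1+π))*(1+D)
        = (1+D) + C₁*(1+D) + (π*K₂*(1+π))*(1+D) := by ring
    rw [hexpand]
    have h4 := h2.trans h3
    linarith only [h1, h4, hD0]
  calc ‖(∫ x in (0:ℝ)..a, F x * ccos x) + ∫ x in a..π, G x * ccos x‖
      = ((n:ℝ)^2 * ‖(∫ x in (0:ℝ)..a, F x * ccos x) + ∫ x in a..π, G x * ccos x‖)/(n:ℝ)^2 := by
        field_simp
    _ ≤ (Real.exp (m*π) * (C₁ + (π*K₂)*Real.sqrt ρ))/(n:ℝ)^2 := by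
        gcongr
    _ = (Real.exp (π*m) * (C₁ + (π*K₂)*Real.sqrt ρ))/(n:ℝ)^2 := by rw [mul_comm m π]
    _ ≤ C * (Real.exp (π*m)/(n:ℝ)^2) * (1 + (1+ρ)/(1+π*Real.sqrt ρ)) := by
        rw [show C * (Real.exp (π*m)/(n:ℝ)^2) * (1 + (1+ρ)/(1+π*Real.sqrt ρ))
          = (Real.exp (π*m) * (C * (1 + (1+ρ)/(1+π*Real.sqrt ρ))))/(n:ℝ)^2 from by ring]
        gcongr
end
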